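/- arXiv:2209.13817 — 11 statements merged into one kernel-verified Lean document; each statement's English description precedes it below -/
import Mathlib

section
/- The polynomial x^2 + x^3 with natural number coefficients cannot be written as a product of two non-monomial polynomials in ℕ[x], i.e., if x^2 + x^3 = g * h with g, h ∈ ℕ[x], then g or h is a monomial. -/
open Polynomial

lemma coeff_mul_le (g h : Polynomial ℕ) (i j : ℕ) :
    g.coeff i * h.coeff j ≤ (g * h).coeff (i + j) := by
  rw [coeff_mul]
  exact Finset.single_le_sum (f := fun x => g.coeff x.1 * h.coeff x.2)
    (fun _ _ => Nat.zero_le _) (Finset.HasAntidiagonal.mem_antidiagonal.mpr (rfl : (i,j).1 + (i,j).2 = i + j))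

lemma mem_support_23 (n : ℕ) (hn : (X ^ 2 + X ^ 3 : Polynomial ℕ).coeff n ≠ 0) :
    n = 2 ∨ n = 3 := by
  by_contra hc
  push_neg at hc
  simp [coeff_add, coeff_X_pow, hc.1, hc.2] at hn

/-- The polynomial `x^2 + x^3 ∈ ℕ[x]` is monolithic: in any factorization
`x^2 + x^3 = g * h` in `ℕ[x]`, one of the factors is a monomial
(a polynomial whose support has cardinality one). -/
theorem x_sq_add_x_cube_monolithic :
    ∀ g h : Polynomial ℕ, (X ^ 2 + X ^ 3 : Polynomial ℕ) = g * h →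
      g.support.card = 1 ∨ h.support.card = 1 := by
  intro g h heq
  by_contra hc
  push_neg at hc
  obtain ⟨hg, hh⟩ := hc
  have hne : (X ^ 2 + X ^ 3 : Polynomial ℕ) ≠ 0 := by
    intro h0
    have := congrArg (fun p => Polynomial.coeff p 2) h0
    simp [coeff_X_pow] at this
  have hg0 : g ≠ 0 := by rintro rfl; simp at heq; exact hne heq
  have hh0 : h ≠ 0 := by rintro rfl; simp at heq; exact hne heq
  have hg2 : 1 < g.support.card :=
    lt_of_le_of_ne (Nat.one_le_iff_ne_zero.mpr
      (by simpa [Finset.card_eq_zero, support_eq_empty] using hg0)) (Ne.symm hg)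
  have hh2 : 1 < h.support.card :=
    lt_of_le_of_ne (Nat.one_le_iff_ne_zero.mpr
      (by simpa [Finset.card_eq_zero, support_eq_empty] using hh0)) (Ne.symm hh)
  obtain ⟨p, hp, P, hP, hpP⟩ := Finset.one_lt_card.mp hg2
  obtain ⟨q, hq, Q, hQ, hqQ⟩ := Finset.one_lt_card.mp hh2
  rw [mem_support_iff] at hp hP hq hQ
  have key : ∀ p P q Q : ℕ, p < P → q < Q → g.coeff p ≠ 0 → g.coeff P ≠ 0 →
      h.coeff q ≠ 0 → h.coeff Q ≠ 0 → False := by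
    intro p P q Q h1 h2 gp gP hq' hQ'
    have c1 : (X ^ 2 + X ^ 3 : Polynomial ℕ).coeff (p + q) ≠ 0 := by
      rw [heq]
      exact (Nat.lt_of_lt_of_le (Nat.mul_pos (Nat.pos_of_ne_zero gp)
        (Nat.pos_of_ne_zero hq')) (coeff_mul_le g h p q)).ne'
    have c2 : (X ^ 2 + X ^ 3 : Polynomial ℕ).coeff (p + Q) ≠ 0 := by
      rw [heq]
      exact (Nat.lt_of_lt_of_le (Nat.mul_pos (Nat.pos_of_ne_zero gp)
        (Nat.pos_of_ne_zero hQ')) (coeff_mul_le g h p Q)).ne'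
    have c3 : (X ^ 2 + X ^ 3 : Polynomial ℕ).coeff (P + Q) ≠ 0 := by
      rw [heq]
      exact (Nat.lt_of_lt_of_le (Nat.mul_pos (Nat.pos_of_ne_zero gP)
        (Nat.pos_of_ne_zero hQ')) (coeff_mul_le g h P Q)).ne'
    have := mem_support_23 _ c1
    have := mem_support_23 _ c2
    have := mem_support_23 _ c3
    omega
  rcases hpP.lt_or_gt with h1 | h1 <;> rcases hqQ.lt_or_gt with h2 | h2
  · exact key p P q Q h1 h2 hp hP hq hQ
  · exact key p P Q q h1 h2 hp hP hQ hq
  · exact key P p q Q h1 h2 hP hp hq hQ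
  · exact key P p Q q h1 h2 hP hp hQ hq
end

section
/- If f, g are nonzero polynomials with natural number coefficients, then the cardinality of the support of f·g is at least |supp(f)| + |supp(g)| − 1. -/
open scoped Pointwise

open Polynomial

/-- For nonzero `f, g ∈ ℕ[x]`, one has `|supp(f·g)| ≥ |supp f| + |supp g| - 1`. -/
theorem support_card_mul_ge :
    ∀ f g : Polynomial ℕ, f ≠ 0 → g ≠ 0 →
      f.support.card + g.support.card - 1 ≤ (f * g).support.card := by
  intro f g hf hg
  have hsub : f.support + g.support ⊆ (f * g).support := by
    intro n hn
    obtain ⟨a, ha, b, hb, rfl⟩ := Finset.mem_add.1 hn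
    rw [Polynomial.mem_support_iff] at ha hb ⊢
    rw [Polynomial.coeff_mul]
    intro h
    rw [Finset.sum_eq_zero_iff] at h
    exact (Nat.mul_eq_zero.1 (h (a, b) (Finset.HasAntidiagonal.mem_antidiagonal.2 rfl))).elim ha hb
  calc f.support.card + g.support.card - 1
      ≤ (f.support + g.support).card :=
        cauchy_davenport_add_of_linearOrder_isCancelAdd
          (Polynomial.support_nonempty.2 hf) (Polynomial.support_nonempty.2 hg)
    _ ≤ (f * g).support.card := Finset.card_le_card hsub
end

section
/- The multiplicative monoid of nonzero polynomials with natural number coefficients is a bounded factorization monoid: the map ℓ(f) = (number of prime factors with multiplicity of the leading coefficient of f) + deg(f) + |supp(f)| − 1 is a length function, i.e., ℓ(f) = 0 iff f is a unit, and ℓ(f·g) ≥ ℓ(f) + ℓ(g). -/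
open Polynomial Finset Pointwise

/-- The length function on nonzero elements of `ℕ[x]`:
`ℓ(f) = Ω(c(f)) + deg f + |supp f| - 1`, where `Ω(c(f))` is the number of
prime factors (with multiplicity) of the leading coefficient of `f`. -/
noncomputable def polyLength (f : Polynomial ℕ) : ℕ :=
  (Nat.primeFactorsList f.leadingCoeff).length + f.natDegree + f.support.card - 1

lemma support_add_subset_support_mul (f g : Polynomial ℕ) :
    f.support + g.support ⊆ (f * g).support := by
  intro k hk
  rw [Finset.mem_add] at hk
  obtain ⟨i, hi, j, hj, rfl⟩ := hk
  rw [Polynomial.mem_support_iff] at hi hj ⊢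
  rw [Polynomial.coeff_mul]
  have h1 : f.coeff i * g.coeff j ≤
      ∑ x ∈ Finset.HasAntidiagonal.antidiagonal (i + j), f.coeff x.1 * g.coeff x.2 := by
    refine Finset.single_le_sum (f := fun x : ℕ × ℕ => f.coeff x.1 * g.coeff x.2)
      (a := (i, j)) (fun _ _ => Nat.zero_le _) ?_
    simp [Finset.mem_antidiagonal]
  have h2 : 0 < f.coeff i * g.coeff j := Nat.pos_of_ne_zero (by
    exact mul_ne_zero hi hj)
  omega

/-- `ℓ` is a length function on the multiplicative monoid of nonzero polynomials
of `ℕ[x]`: `ℓ f = 0` iff `f` is a unit, and `ℓ` is superadditive; hence `ℕ[x]*`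
is a bounded factorization monoid. -/
theorem polyLength_is_length_function :
    (∀ f : Polynomial ℕ, f ≠ 0 → (polyLength f = 0 ↔ IsUnit f)) ∧
    (∀ f g : Polynomial ℕ, f ≠ 0 → g ≠ 0 →
      polyLength f + polyLength g ≤ polyLength (f * g)) := by
  constructor
  · intro f hf
    constructor
    · intro h
      unfold polyLength at h
      have hsupp : 0 < f.support.card :=
        Finset.card_pos.2 (Polynomial.support_nonempty.2 hf)
      have hdeg : f.natDegree = 0 := by omega
      have hΩ : (Nat.primeFactorsList f.leadingCoeff).length = 0 := by omega
      obtain ⟨a, rfl⟩ := Polynomial.natDegree_eq_zero.1 hdeg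
      have ha : a ≠ 0 := fun h0 => hf (by simp [h0])
      have hlc : (Polynomial.C a).leadingCoeff = a := by
        simp [Polynomial.leadingCoeff]
      rw [hlc, List.length_eq_zero_iff, Nat.primeFactorsList_eq_nil] at hΩ
      rcases hΩ with h0 | h1
      · exact absurd h0 ha
      · subst h1; simp
    · intro h
      obtain ⟨r, hr, rfl⟩ := Polynomial.isUnit_iff.1 h
      have : r = 1 := Nat.isUnit_iff.1 hr
      subst this
      unfold polyLength
      rw [map_one, Polynomial.leadingCoeff_one, Polynomial.natDegree_one,
        ← map_one (Polynomial.C (R := ℕ)), Polynomial.support_C one_ne_zero]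
      simp
  · intro f g hf hg
    have hfg : f * g ≠ 0 := mul_ne_zero hf hg
    have hΩ : (Nat.primeFactorsList (f * g).leadingCoeff).length =
        (Nat.primeFactorsList f.leadingCoeff).length +
        (Nat.primeFactorsList g.leadingCoeff).length := by
      rw [Polynomial.leadingCoeff_mul]
      rw [(Nat.perm_primeFactorsList_mul (Polynomial.leadingCoeff_ne_zero.2 hf)
        (Polynomial.leadingCoeff_ne_zero.2 hg)).length_eq, List.length_append]
    have hdeg : (f * g).natDegree = f.natDegree + g.natDegree :=
      Polynomial.natDegree_mul hf hg
    have hcard : f.support.card + g.support.card - 1 ≤ (f * g).support.card := by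
      calc f.support.card + g.support.card - 1
          ≤ (f.support + g.support).card :=
            cauchy_davenport_add_of_linearOrder_isCancelAdd
              (Polynomial.support_nonempty.2 hf) (Polynomial.support_nonempty.2 hg)
        _ ≤ (f * g).support.card :=
            Finset.card_le_card (support_add_subset_support_mul f g)
    have h1 : 0 < f.support.card := Finset.card_pos.2 (Polynomial.support_nonempty.2 hf)
    have h2 : 0 < g.support.card := Finset.card_pos.2 (Polynomial.support_nonempty.2 hg)
    unfold polyLength
    omega
end

section
/- A commutative cancellative monoid M is a bounded factorization monoid if and only if there exists a length function ℓ: M → ℕ (ℓ(u) = 0 iff u is a unit, and ℓ(bc) ≥ ℓ(b) + ℓ(c) for all b, c). -/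
/-- A commutative cancellative monoid is a bounded factorization monoid:
every element admits a bound on the cardinalities of multisets of nonunits
whose product is that element. -/
def IsBFM (M : Type*) [CancelCommMonoid M] : Prop :=
  ∀ b : M, ∃ N : ℕ, ∀ z : Multiset M, (∀ x ∈ z, ¬ IsUnit x) → z.prod = b → z.card ≤ N

/-- A commutative cancellative monoid `M` is a bounded factorization monoid if
and only if there exists a length function `ℓ : M → ℕ`, i.e. `ℓ u = 0` iff `u`
is a unit and `ℓ (b*c) ≥ ℓ b + ℓ c` for all `b, c`. -/
theorem bfm_iff_exists_length_function (M : Type*) [CancelCommMonoid M] :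
    IsBFM M ↔ ∃ ℓ : M → ℕ,
      (∀ u : M, ℓ u = 0 ↔ IsUnit u) ∧ ∀ b c : M, ℓ b + ℓ c ≤ ℓ (b * c) := by
  constructor
  · intro h
    set S : M → Set ℕ := fun b =>
      {n | ∃ z : Multiset M, (∀ x ∈ z, ¬IsUnit x) ∧ z.prod = b ∧ z.card = n} with hS
    have hbdd : ∀ b, BddAbove (S b) := by
      intro b
      obtain ⟨N, hN⟩ := h b
      exact ⟨N, fun n ⟨z, hz, hp, hc⟩ => hc ▸ hN z hz hp⟩
    have hone : ∀ b : M, ¬IsUnit b → 1 ∈ S b := by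
      intro b hb
      exact ⟨{b}, by simpa using hb, by simp, by simp⟩
    have hzero : ∀ u : M, IsUnit u → sSup (S u) = 0 := by
      intro u hu
      have hsub : S u ⊆ {0} := by
        rintro n ⟨z, hz, hp, hc⟩
        rcases Multiset.empty_or_exists_mem z with h0 | ⟨x, hx⟩
        · simp [h0] at hc; simpa using hc.symm
        · exfalso
          obtain ⟨z', rfl⟩ := Multiset.exists_cons_of_mem hx
          rw [Multiset.prod_cons] at hp
          exact hz x hx (isUnit_of_mul_isUnit_left (hp ▸ hu))
      by_cases hne : (S u).Nonempty
      · exact Nat.le_zero.mp (csSup_le hne fun n hn => le_of_eq (hsub hn))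
      · rw [Set.not_nonempty_iff_eq_empty] at hne
        simp [hne]
    have hmem : ∀ b : M, ¬IsUnit b → sSup (S b) ∈ S b := fun b hb =>
      Nat.sSup_mem ⟨1, hone b hb⟩ (hbdd b)
    have hcomb : ∀ (m n : ℕ) (b c : M), m ∈ S b → n ∈ S c → m + n ∈ S (b * c) := by
      rintro m n b c ⟨z, hz, hpz, hcz⟩ ⟨w, hw, hpw, hcw⟩
      refine ⟨z + w, ?_, by simp [hpz, hpw], by simp [hcz, hcw]⟩
      intro x hx
      rcases Multiset.mem_add.mp hx with hx | hx
      · exact hz x hx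
      · exact hw x hx
    have hshift : ∀ (n : ℕ) (b c : M), 1 ≤ n → IsUnit b → n ∈ S c → n ∈ S (b * c) := by
      rintro n b c hn hb ⟨z, hz, hpz, hcz⟩
      rcases Multiset.empty_or_exists_mem z with h0 | ⟨x, hx⟩
      · subst h0; simp at hcz; omega
      · obtain ⟨z', rfl⟩ := Multiset.exists_cons_of_mem hx
        refine ⟨(b * x) ::ₘ z', ?_, ?_, by simpa using hcz⟩
        · intro y hy
          rcases Multiset.mem_cons.mp hy with rfl | hy
          · intro hy'
            obtain ⟨v, rfl⟩ := hb
            exact hz x hx (isUnit_of_mul_isUnit_right hy')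
          · exact hz y (Multiset.mem_cons_of_mem hy)
        · rw [Multiset.prod_cons] at hpz ⊢
          rw [mul_assoc, hpz]
    refine ⟨fun b => sSup (S b), ?_, ?_⟩
    · intro u
      show sSup (S u) = 0 ↔ IsUnit u
      constructor
      · intro h0
        by_contra hu
        have := le_csSup (hbdd u) (hone u hu)
        omega
      · exact hzero u
    · intro b c
      show sSup (S b) + sSup (S c) ≤ sSup (S (b * c))
      by_cases hb : IsUnit b <;> by_cases hc : IsUnit c
      · simp [hzero b hb, hzero c hc]
      · rw [hzero b hb]
        simpa using le_csSup (hbdd (b * c)) (hshift _ b c (le_csSup (hbdd c) (hone c hc)) hb (hmem c hc))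
      · rw [hzero c hc]
        have : sSup (S b) ∈ S (c * b) := hshift _ c b (le_csSup (hbdd b) (hone b hb)) hc (hmem b hb)
        rw [mul_comm] at this
        simpa using le_csSup (hbdd (b * c)) this
      · exact le_csSup (hbdd (b * c)) (hcomb _ _ b c (hmem b hb) (hmem c hc))
  · rintro ⟨ℓ, h0, hadd⟩ b
    refine ⟨ℓ b, fun z hz hp => ?_⟩
    subst hp
    induction z using Multiset.induction with
    | empty => simp
    | cons x z ih =>
      have hx : 1 ≤ ℓ x := by
        have := (h0 x).not.mpr (hz x (Multiset.mem_cons_self x z))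
        omega
      have hz' : z.card ≤ ℓ z.prod := ih fun y hy => hz y (Multiset.mem_cons_of_mem hy)
      calc (x ::ₘ z).card = z.card + 1 := by simp [Multiset.card_cons]
        _ ≤ ℓ z.prod + ℓ x := by omega
        _ ≤ ℓ (x * z.prod) := by rw [add_comm]; exact hadd x z.prod
        _ = ℓ ((x ::ₘ z).prod) := by rw [Multiset.prod_cons]
end

section
/- For every natural number m ≥ 1, the binomial x^m + 1 is irreducible in the multiplicative monoid of nonzero polynomials with natural number coefficients: if x^m + 1 = g·h with g, h ∈ ℕ[x], then g = 1 or h = 1. -/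
open Polynomial

/-- For every `m ≥ 1`, the binomial `x^m + 1` is irreducible in the
multiplicative monoid of nonzero polynomials of `ℕ[x]`: any factorization
`x^m + 1 = g * h` in `ℕ[x]` forces `g = 1` or `h = 1`. -/
theorem xPow_add_one_irreducible :
    ∀ m : ℕ, 1 ≤ m → ∀ g h : Polynomial ℕ,
      (X ^ m + 1 : Polynomial ℕ) = g * h → g = 1 ∨ h = 1 := by
  intro m hm g h heq
  have hm0 : m ≠ 0 := by omega
  have hcoeff : ∀ k, (g * h).coeff k
      = (if k = m then 1 else 0) + (if k = 0 then 1 else 0) := by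
    intro k
    rw [← heq]
    simp [coeff_X_pow, coeff_one]
  -- constant coefficients are 1
  have h0 : g.coeff 0 * h.coeff 0 = 1 := by
    have := hcoeff 0
    rw [mul_coeff_zero] at this
    simpa [hm0, Ne.symm hm0] using this
  have hg0 : g.coeff 0 = 1 := Nat.eq_one_of_mul_eq_one_right h0
  have hh0 : h.coeff 0 = 1 := Nat.eq_one_of_mul_eq_one_left h0
  -- every nonzero coefficient index of g is 0 or m
  have key : ∀ k, g.coeff k ≠ 0 → k = 0 ∨ k = m := by
    intro k hk
    by_contra hc
    push_neg at hc
    have hzero : (g * h).coeff k = 0 := by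
      rw [hcoeff k]; simp [hc.1, hc.2]
    rw [coeff_mul] at hzero
    have hmem : (k, 0) ∈ Finset.HasAntidiagonal.antidiagonal k := by
      simp
    have := (Finset.sum_eq_zero_iff.mp hzero) (k, 0) hmem
    simp [hh0] at this
    exact hk this
  have keyh : ∀ k, h.coeff k ≠ 0 → k = 0 ∨ k = m := by
    intro k hk
    by_contra hc
    push_neg at hc
    have hzero : (g * h).coeff k = 0 := by
      rw [hcoeff k]; simp [hc.1, hc.2]
    rw [coeff_mul] at hzero
    have hmem : ((0 : ℕ), k) ∈ Finset.HasAntidiagonal.antidiagonal k := by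
      simp
    have := (Finset.sum_eq_zero_iff.mp hzero) (0, k) hmem
    simp [hg0] at this
    exact hk this
  -- coefficient at 2m forces g.coeff m * h.coeff m = 0
  have h2m : (g * h).coeff (2 * m) = 0 := by
    rw [hcoeff]
    have h1 : 2 * m ≠ m := by omega
    have h2 : 2 * m ≠ 0 := by omega
    simp [h1, h2]
  rw [coeff_mul] at h2m
  have hmm : ((m : ℕ), m) ∈ Finset.HasAntidiagonal.antidiagonal (2 * m) := by
    simp; omega
  have hmul0 : g.coeff m * h.coeff m = 0 :=
    (Finset.sum_eq_zero_iff.mp h2m) (m, m) hmm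
  rcases Nat.mul_eq_zero.mp hmul0 with hgm | hhm
  · left
    ext n
    rcases eq_or_ne n 0 with rfl | hn
    · simpa using hg0
    · have : g.coeff n = 0 := by
        by_contra hne
        rcases key n hne with h' | h'
        · exact hn h'
        · rw [h'] at hne; exact hne hgm
      simp [this, coeff_one, hn]
  · right
    ext n
    rcases eq_or_ne n 0 with rfl | hn
    · simpa using hh0
    · have : h.coeff n = 0 := by
        by_contra hne
        rcases keyh n hne with h' | h'
        · exact hn h'
        · rw [h'] at hne; exact hne hhm
      simp [this, coeff_one, hn]
end

section
/- The polynomial x^6 + x^5 + x^3 + 1 is irreducible in ℕ[x]: it cannot be written as a product of two nonunit polynomials with natural number coefficients. -/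
open Polynomial

/-- The polynomial `x^6 + x^5 + x^3 + 1` is irreducible in `ℕ[x]`: in any
factorization into two polynomials with natural number coefficients, one factor
is a unit. -/
theorem f2_irreducible :
    ∀ g h : Polynomial ℕ, (X ^ 6 + X ^ 5 + X ^ 3 + 1 : Polynomial ℕ) = g * h →
      IsUnit g ∨ IsUnit h := by
  intro g h hf
  -- coefficient 0 : g.coeff 0 = h.coeff 0 = 1
  have c0 : g.coeff 0 * h.coeff 0 = 1 := by
    have := congrArg (fun p => Polynomial.coeff p 0) hf
    simp only [mul_coeff_zero] at this
    rw [← this]; simp [coeff_X_pow, coeff_one]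
  obtain ⟨hg0, hh0⟩ := mul_eq_one.mp  c0
  -- coefficient 1 : g.coeff 1 = h.coeff 1 = 0
  have c1 : g.coeff 0 * h.coeff 1 + g.coeff 1 * h.coeff 0 = 0 := by
    have := congrArg (fun p => Polynomial.coeff p 1) hf
    simp only [coeff_mul, Finset.Nat.sum_antidiagonal_eq_sum_range_succ_mk] at this
    rw [Finset.sum_range_succ, Finset.sum_range_succ, Finset.sum_range_zero] at this
    simpa [coeff_X_pow, coeff_one] using this.symm
  rw [hg0, hh0, one_mul, mul_one] at c1
  obtain ⟨hh1, hg1⟩ := Nat.add_eq_zero_iff.mp c1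
  -- coefficient 2 : g.coeff 2 = h.coeff 2 = 0
  have c2 : g.coeff 0 * h.coeff 2 + g.coeff 1 * h.coeff 1 + g.coeff 2 * h.coeff 0 = 0 := by
    have := congrArg (fun p => Polynomial.coeff p 2) hf
    simp only [coeff_mul, Finset.Nat.sum_antidiagonal_eq_sum_range_succ_mk] at this
    rw [Finset.sum_range_succ, Finset.sum_range_succ, Finset.sum_range_succ,
      Finset.sum_range_zero] at this
    simpa [coeff_X_pow, coeff_one] using this.symm
  rw [hg0, hh0, hg1, hh1, one_mul, mul_one, mul_zero] at c2
  simp only [add_zero, zero_add] at c2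
  obtain ⟨hh2, hg2⟩ := Nat.add_eq_zero_iff.mp c2
  -- coefficient 3 : h.coeff 3 + g.coeff 3 = 1
  have c3 : g.coeff 0 * h.coeff 3 + g.coeff 1 * h.coeff 2 + g.coeff 2 * h.coeff 1
      + g.coeff 3 * h.coeff 0 = 1 := by
    have := congrArg (fun p => Polynomial.coeff p 3) hf
    simp only [coeff_mul, Finset.Nat.sum_antidiagonal_eq_sum_range_succ_mk] at this
    rw [Finset.sum_range_succ, Finset.sum_range_succ, Finset.sum_range_succ,
      Finset.sum_range_succ, Finset.sum_range_zero] at this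
    simpa [coeff_X_pow, coeff_one] using this.symm
  rw [hg0, hh0, hg1, hh1, hg2, hh2, one_mul, mul_one] at c3
  simp only [mul_zero, zero_mul, add_zero, zero_add] at c3
  -- nonzero factors and degree sum
  have hfne : (X ^ 6 + X ^ 5 + X ^ 3 + 1 : Polynomial ℕ) ≠ 0 := by
    intro hz
    have := congrArg (fun p => Polynomial.coeff p 0) hz
    simp [coeff_X_pow, coeff_one] at this
  have hgne : g ≠ 0 := by rintro rfl; simp at hf; exact hfne hf
  have hhne : h ≠ 0 := by rintro rfl; simp at hf; exact hfne hf
  have hdegf : (X ^ 6 + X ^ 5 + X ^ 3 + 1 : Polynomial ℕ).natDegree = 6 := by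
    compute_degree!
  have hdeg : g.natDegree + h.natDegree = 6 := by
    rw [← natDegree_mul hgne hhne, ← hf, hdegf]
  -- leading coefficients
  have hmon : (X ^ 6 + X ^ 5 + X ^ 3 + 1 : Polynomial ℕ).Monic := by monicity!
  have hlc : g.leadingCoeff * h.leadingCoeff = 1 := by
    rw [← leadingCoeff_mul, ← hf]; exact hmon
  obtain ⟨hglc, hhlc⟩ := mul_eq_one.mp  hlc
  rw [leadingCoeff] at hglc
  rw [leadingCoeff] at hhlc
  -- a factor with natDegree 0 and constant coeff 1 is a unit
  have key : ∀ p : Polynomial ℕ, p.coeff 0 = 1 → p.natDegree = 0 → IsUnit p := by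
    intro p hp0 hpd
    have := Polynomial.eq_C_of_natDegree_eq_zero hpd
    rw [this, hp0]
    simp
  -- case analysis on natDegree g
  have hgle : g.natDegree ≤ 6 := by omega
  interval_cases hdg : g.natDegree
  · exact Or.inl (key g hg0 hdg)
  · rw [hg1] at hglc; exact absurd hglc zero_ne_one
  · rw [hg2] at hglc; exact absurd hglc zero_ne_one
  · have hdh : h.natDegree = 3 := by omega
    rw [hdh] at hhlc
    rw [hglc, hhlc] at c3
    omega
  · have hdh : h.natDegree = 2 := by omega
    rw [hdh, hh2] at hhlc; exact absurd hhlc zero_ne_one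
  · have hdh : h.natDegree = 1 := by omega
    rw [hdh, hh1] at hhlc; exact absurd hhlc zero_ne_one
  · have hdh : h.natDegree = 0 := by omega
    exact Or.inr (key h hh0 hdh)
end

section
/- ℕ[x] is not a half-factorial monoid: the polynomial x^{10} + x^9 + x^8 + 3x^7 + 2x^6 + 2x^5 + 2x^4 + x^3 + x^2 + x + 1 admits a factorization into 2 irreducibles, namely (x^4 + x^2 + x + 1)(x^6 + x^5 + x^3 + 1), and also a factorization into 3 nonunits, namely (x + 1)(x^2 + 1)(x^7 + 2x^4 + 1), so it has two factorizations into irreducibles of different lengths. -/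
open Polynomial

/-- `f` is irreducible (an atom) in the multiplicative monoid `ℕ[x]*`. -/
def MonoidIrreducible (f : Polynomial ℕ) : Prop :=
  f ≠ 0 ∧ ¬ IsUnit f ∧ ∀ g h : Polynomial ℕ, f = g * h → IsUnit g ∨ IsUnit h


lemma coeff_mul_range (g h : Polynomial ℕ) (n : ℕ) :
    (g * h).coeff n = ∑ i ∈ Finset.range (n+1), g.coeff i * h.coeff (n-i) := by
  rw [Polynomial.coeff_mul, Finset.Nat.sum_antidiagonal_eq_sum_range_succ_mk]

lemma prep (F g h : Polynomial ℕ) (d : ℕ) (hgh : F = g * h)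
    (hd : F.natDegree = d) (hld : F.coeff d = 1) (h00 : F.coeff 0 = 1) :
    g.natDegree + h.natDegree = d ∧ g.coeff g.natDegree = 1 ∧ h.coeff h.natDegree = 1
      ∧ g.coeff 0 = 1 ∧ h.coeff 0 = 1 := by
  have hF0 : F ≠ 0 := fun hF => by simp [hF] at h00
  have hg0 : g ≠ 0 := fun hg => hF0 (by simp [hgh, hg])
  have hh0 : h ≠ 0 := fun hh => hF0 (by simp [hgh, hh])
  have hdeg : g.natDegree + h.natDegree = d := by
    rw [← hd, hgh, Polynomial.natDegree_mul hg0 hh0]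
  have hlead : g.leadingCoeff * h.leadingCoeff = 1 := by
    rw [← Polynomial.leadingCoeff_mul, ← hgh, Polynomial.leadingCoeff, hd, hld]
  have hc0 : g.coeff 0 * h.coeff 0 = 1 := by
    rw [← Polynomial.mul_coeff_zero, ← hgh, h00]
  exact ⟨hdeg, Nat.eq_one_of_mul_eq_one_right hlead, Nat.eq_one_of_mul_eq_one_left hlead,
    Nat.eq_one_of_mul_eq_one_right hc0, Nat.eq_one_of_mul_eq_one_left hc0⟩

lemma unit_of_deg0 (g : Polynomial ℕ) (h0 : g.natDegree = 0) (hl : g.coeff g.natDegree = 1) :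
    IsUnit g := by
  rw [h0] at hl
  rw [Polynomial.eq_C_of_natDegree_eq_zero h0, hl]
  simp

lemma irred_X1 : MonoidIrreducible (X + 1 : Polynomial ℕ) := by
  have hd : (X + 1 : Polynomial ℕ).natDegree = 1 := by compute_degree!
  refine ⟨fun hF => by simp [hF] at hd,
    fun hu => by simp [Polynomial.natDegree_eq_zero_of_isUnit hu] at hd, fun g h hgh => ?_⟩
  obtain ⟨hdeg, hgl, hhl, hg0, hh0⟩ := prep _ g h 1 hgh hd
    (by simp [coeff_one]) (by simp [coeff_one])
  by_cases hg : g.natDegree = 0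
  · exact Or.inl (unit_of_deg0 g hg hgl)
  · exact Or.inr (unit_of_deg0 h (by omega) hhl)

lemma irred_X2 : MonoidIrreducible (X ^ 2 + 1 : Polynomial ℕ) := by
  have hd : (X ^ 2 + 1 : Polynomial ℕ).natDegree = 2 := by compute_degree!
  refine ⟨fun hF => by simp [hF] at hd,
    fun hu => by simp [Polynomial.natDegree_eq_zero_of_isUnit hu] at hd, fun g h hgh => ?_⟩
  obtain ⟨hdeg, hgl, hhl, hg0, hh0⟩ := prep _ g h 2 hgh hd
    (by simp [coeff_one]) (by simp [coeff_one])
  by_cases hg : g.natDegree = 0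
  · exact Or.inl (unit_of_deg0 g hg hgl)
  by_cases hh : h.natDegree = 0
  · exact Or.inr (unit_of_deg0 h hh hhl)
  exfalso
  have hm : g.natDegree = 1 := by omega
  have hn : h.natDegree = 1 := by omega
  have E : (X ^ 2 + 1 : Polynomial ℕ).coeff 1
      = ∑ i ∈ Finset.range 2, g.coeff i * h.coeff (1-i) := by rw [hgh, coeff_mul_range]
  rw [hm] at hgl; rw [hn] at hhl
  simp only [Finset.sum_range_succ, Finset.sum_range_zero] at E
  norm_num [hgl, hhl, hg0, hh0, coeff_one] at E

lemma irred_F4 : MonoidIrreducible (X ^ 4 + X ^ 2 + X + 1 : Polynomial ℕ) := by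
  have hd : (X ^ 4 + X ^ 2 + X + 1 : Polynomial ℕ).natDegree = 4 := by compute_degree!
  refine ⟨fun hF => by simp [hF] at hd,
    fun hu => by simp [Polynomial.natDegree_eq_zero_of_isUnit hu] at hd, fun g h hgh => ?_⟩
  obtain ⟨hdeg, hgl, hhl, hg0, hh0⟩ := prep _ g h 4 hgh hd
    (by simp [coeff_one, coeff_X]) (by simp [coeff_one, coeff_X])
  by_cases hg : g.natDegree = 0
  · exact Or.inl (unit_of_deg0 g hg hgl)
  by_cases hh : h.natDegree = 0
  · exact Or.inr (unit_of_deg0 h hh hhl)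
  exfalso
  have E3 : (X ^ 4 + X ^ 2 + X + 1 : Polynomial ℕ).coeff 3
      = ∑ i ∈ Finset.range 4, g.coeff i * h.coeff (3-i) := by rw [hgh, coeff_mul_range]
  have E1 : (X ^ 4 + X ^ 2 + X + 1 : Polynomial ℕ).coeff 1
      = ∑ i ∈ Finset.range 2, g.coeff i * h.coeff (1-i) := by rw [hgh, coeff_mul_range]
  simp only [Finset.sum_range_succ, Finset.sum_range_zero] at E3 E1
  have hmn : g.natDegree = 1 ∧ h.natDegree = 3 ∨ g.natDegree = 2 ∧ h.natDegree = 2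
      ∨ g.natDegree = 3 ∧ h.natDegree = 1 := by omega
  rcases hmn with ⟨hm, hn⟩ | ⟨hm, hn⟩ | ⟨hm, hn⟩ <;> rw [hm] at hgl <;> rw [hn] at hhl
  · have g2 : g.coeff 2 = 0 := Polynomial.coeff_eq_zero_of_natDegree_lt (by omega)
    have g3 : g.coeff 3 = 0 := Polynomial.coeff_eq_zero_of_natDegree_lt (by omega)
    norm_num [hgl, hhl, hg0, hh0, g2, g3, coeff_one, coeff_X] at E3
    omega
  · have g3 : g.coeff 3 = 0 := Polynomial.coeff_eq_zero_of_natDegree_lt (by omega)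
    have h3 : h.coeff 3 = 0 := Polynomial.coeff_eq_zero_of_natDegree_lt (by omega)
    norm_num [hgl, hhl, hg0, hh0, g3, h3, coeff_one, coeff_X] at E3 E1
    omega
  · have h2 : h.coeff 2 = 0 := Polynomial.coeff_eq_zero_of_natDegree_lt (by omega)
    have h3 : h.coeff 3 = 0 := Polynomial.coeff_eq_zero_of_natDegree_lt (by omega)
    norm_num [hgl, hhl, hg0, hh0, h2, h3, coeff_one, coeff_X] at E3
    omega

lemma irred_F6 : MonoidIrreducible (X ^ 6 + X ^ 5 + X ^ 3 + 1 : Polynomial ℕ) := by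
  have hd : (X ^ 6 + X ^ 5 + X ^ 3 + 1 : Polynomial ℕ).natDegree = 6 := by compute_degree!
  refine ⟨fun hF => by simp [hF] at hd,
    fun hu => by simp [Polynomial.natDegree_eq_zero_of_isUnit hu] at hd, fun g h hgh => ?_⟩
  obtain ⟨hdeg, hgl, hhl, hg0, hh0⟩ := prep _ g h 6 hgh hd
    (by simp [coeff_one]) (by simp [coeff_one])
  by_cases hg : g.natDegree = 0
  · exact Or.inl (unit_of_deg0 g hg hgl)
  by_cases hh : h.natDegree = 0
  · exact Or.inr (unit_of_deg0 h hh hhl)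
  exfalso
  have E1 : (X ^ 6 + X ^ 5 + X ^ 3 + 1 : Polynomial ℕ).coeff 1
      = ∑ i ∈ Finset.range 2, g.coeff i * h.coeff (1-i) := by rw [hgh, coeff_mul_range]
  have E2 : (X ^ 6 + X ^ 5 + X ^ 3 + 1 : Polynomial ℕ).coeff 2
      = ∑ i ∈ Finset.range 3, g.coeff i * h.coeff (2-i) := by rw [hgh, coeff_mul_range]
  have E5 : (X ^ 6 + X ^ 5 + X ^ 3 + 1 : Polynomial ℕ).coeff 5
      = ∑ i ∈ Finset.range 6, g.coeff i * h.coeff (5-i) := by rw [hgh, coeff_mul_range]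
  simp only [Finset.sum_range_succ, Finset.sum_range_zero] at E1 E2 E5
  have hmn : g.natDegree = 1 ∧ h.natDegree = 5 ∨ g.natDegree = 2 ∧ h.natDegree = 4
      ∨ g.natDegree = 3 ∧ h.natDegree = 3 ∨ g.natDegree = 4 ∧ h.natDegree = 2
      ∨ g.natDegree = 5 ∧ h.natDegree = 1 := by omega
  rcases hmn with ⟨hm, hn⟩ | ⟨hm, hn⟩ | ⟨hm, hn⟩ | ⟨hm, hn⟩ | ⟨hm, hn⟩ <;>
    rw [hm] at hgl <;> rw [hn] at hhl
  · norm_num [hgl, hhl, hg0, hh0, coeff_one] at E1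
    omega
  · norm_num [hgl, hhl, hg0, hh0, coeff_one] at E2
    generalize g.coeff 1 * h.coeff 1 = t at E2
    omega
  · have g4 : g.coeff 4 = 0 := Polynomial.coeff_eq_zero_of_natDegree_lt (by omega)
    have g5 : g.coeff 5 = 0 := Polynomial.coeff_eq_zero_of_natDegree_lt (by omega)
    have h4 : h.coeff 4 = 0 := Polynomial.coeff_eq_zero_of_natDegree_lt (by omega)
    have h5 : h.coeff 5 = 0 := Polynomial.coeff_eq_zero_of_natDegree_lt (by omega)
    norm_num [hgl, hhl, hg0, hh0, g4, g5, h4, h5, coeff_one] at E2 E5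
    generalize g.coeff 1 * h.coeff 1 = t at E2
    omega
  · norm_num [hgl, hhl, hg0, hh0, coeff_one] at E2
    generalize g.coeff 1 * h.coeff 1 = t at E2
    omega
  · norm_num [hgl, hhl, hg0, hh0, coeff_one] at E1
    omega

lemma irred_F7 : MonoidIrreducible (X ^ 7 + 2 * X ^ 4 + 1 : Polynomial ℕ) := by
  have hd : (X ^ 7 + 2 * X ^ 4 + 1 : Polynomial ℕ).natDegree = 7 := by compute_degree!
  refine ⟨fun hF => by simp [hF] at hd,
    fun hu => by simp [Polynomial.natDegree_eq_zero_of_isUnit hu] at hd, fun g h hgh => ?_⟩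
  obtain ⟨hdeg, hgl, hhl, hg0, hh0⟩ := prep _ g h 7 hgh hd
    (by simp [coeff_one]) (by simp [coeff_one])
  by_cases hg : g.natDegree = 0
  · exact Or.inl (unit_of_deg0 g hg hgl)
  by_cases hh : h.natDegree = 0
  · exact Or.inr (unit_of_deg0 h hh hhl)
  exfalso
  have E1 : (X ^ 7 + 2 * X ^ 4 + 1 : Polynomial ℕ).coeff 1
      = ∑ i ∈ Finset.range 2, g.coeff i * h.coeff (1-i) := by rw [hgh, coeff_mul_range]
  have E2 : (X ^ 7 + 2 * X ^ 4 + 1 : Polynomial ℕ).coeff 2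
      = ∑ i ∈ Finset.range 3, g.coeff i * h.coeff (2-i) := by rw [hgh, coeff_mul_range]
  have E3 : (X ^ 7 + 2 * X ^ 4 + 1 : Polynomial ℕ).coeff 3
      = ∑ i ∈ Finset.range 4, g.coeff i * h.coeff (3-i) := by rw [hgh, coeff_mul_range]
  simp only [Finset.sum_range_succ, Finset.sum_range_zero] at E1 E2 E3
  have hmn : g.natDegree = 1 ∧ h.natDegree = 6 ∨ g.natDegree = 2 ∧ h.natDegree = 5
      ∨ g.natDegree = 3 ∧ h.natDegree = 4 ∨ g.natDegree = 4 ∧ h.natDegree = 3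
      ∨ g.natDegree = 5 ∧ h.natDegree = 2 ∨ g.natDegree = 6 ∧ h.natDegree = 1 := by omega
  rcases hmn with ⟨hm, hn⟩ | ⟨hm, hn⟩ | ⟨hm, hn⟩ | ⟨hm, hn⟩ | ⟨hm, hn⟩ | ⟨hm, hn⟩ <;>
    rw [hm] at hgl <;> rw [hn] at hhl
  · norm_num [hgl, hhl, hg0, hh0, coeff_one] at E1
    omega
  · norm_num [hgl, hhl, hg0, hh0, coeff_one] at E2
    generalize g.coeff 1 * h.coeff 1 = t at E2
    omega
  · norm_num [hgl, hhl, hg0, hh0, coeff_one] at E3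
    generalize g.coeff 1 * h.coeff 2 = t1 at E3
    generalize g.coeff 2 * h.coeff 1 = t2 at E3
    omega
  · norm_num [hgl, hhl, hg0, hh0, coeff_one] at E3
    generalize g.coeff 1 * h.coeff 2 = t1 at E3
    generalize g.coeff 2 * h.coeff 1 = t2 at E3
    omega
  · norm_num [hgl, hhl, hg0, hh0, coeff_one] at E2
    generalize g.coeff 1 * h.coeff 1 = t at E2
    omega
  · norm_num [hgl, hhl, hg0, hh0, coeff_one] at E1
    omega

/-- `ℕ[x]` is not half-factorial: the polynomial
`x^10 + x^9 + x^8 + 3x^7 + 2x^6 + 2x^5 + 2x^4 + x^3 + x^2 + x + 1` equals both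
`(x^4+x^2+x+1)(x^6+x^5+x^3+1)` (a product of 2 irreducibles) and
`(x+1)(x^2+1)(x^7+2x^4+1)` (a product of 3 nonunits); hence it has two
factorizations into irreducibles of different lengths. -/
theorem natPolynomial_not_half_factorial :
    (X ^ 10 + X ^ 9 + X ^ 8 + 3 * X ^ 7 + 2 * X ^ 6 + 2 * X ^ 5 + 2 * X ^ 4
        + X ^ 3 + X ^ 2 + X + 1 : Polynomial ℕ)
      = (X ^ 4 + X ^ 2 + X + 1) * (X ^ 6 + X ^ 5 + X ^ 3 + 1) ∧
    MonoidIrreducible (X ^ 4 + X ^ 2 + X + 1) ∧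
    MonoidIrreducible (X ^ 6 + X ^ 5 + X ^ 3 + 1) ∧
    (X ^ 10 + X ^ 9 + X ^ 8 + 3 * X ^ 7 + 2 * X ^ 6 + 2 * X ^ 5 + 2 * X ^ 4
        + X ^ 3 + X ^ 2 + X + 1 : Polynomial ℕ)
      = (X + 1) * (X ^ 2 + 1) * (X ^ 7 + 2 * X ^ 4 + 1) ∧
    (∃ z z' : Multiset (Polynomial ℕ),
      (∀ p ∈ z, MonoidIrreducible p) ∧
      z.prod = X ^ 10 + X ^ 9 + X ^ 8 + 3 * X ^ 7 + 2 * X ^ 6 + 2 * X ^ 5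
        + 2 * X ^ 4 + X ^ 3 + X ^ 2 + X + 1 ∧
      (∀ p ∈ z', MonoidIrreducible p) ∧
      z'.prod = X ^ 10 + X ^ 9 + X ^ 8 + 3 * X ^ 7 + 2 * X ^ 6 + 2 * X ^ 5
        + 2 * X ^ 4 + X ^ 3 + X ^ 2 + X + 1 ∧
      z.card = 2 ∧ 3 ≤ z'.card) := by
  refine ⟨by ring, irred_F4, irred_F6, by ring,
    ⟨{X ^ 4 + X ^ 2 + X + 1, X ^ 6 + X ^ 5 + X ^ 3 + 1},
     {X + 1, X ^ 2 + 1, X ^ 7 + 2 * X ^ 4 + 1}, ?_, ?_, ?_, ?_, ?_, ?_⟩⟩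
  · intro p hp
    simp only [Multiset.insert_eq_cons, Multiset.mem_cons, Multiset.mem_singleton] at hp
    rcases hp with rfl | rfl
    · exact irred_F4
    · exact irred_F6
  · simp only [Multiset.insert_eq_cons, Multiset.prod_cons, Multiset.prod_singleton]
    ring
  · intro p hp
    simp only [Multiset.insert_eq_cons, Multiset.mem_cons, Multiset.mem_singleton] at hp
    rcases hp with rfl | rfl | rfl
    · exact irred_X1
    · exact irred_X2
    · exact irred_F7
  · simp only [Multiset.insert_eq_cons, Multiset.prod_cons, Multiset.prod_singleton]
    ring
  · rfl
  · simp
end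

section
/- For natural numbers n, m ≥ 1, the polynomial (y + n)^m (y^2 − y + 1) has all coefficients nonnegative (i.e., lies in ℕ[y]) if and only if m ≥ n. -/
open Polynomial

private lemma coeffs_key (n p q : ℤ) (hn : 1 ≤ n) (hp : 2 ≤ p) (hq : 2 ≤ q) :
    n*p*q ≤ n^2*p*(p-1) + q*(q-1) := by
  nlinarith [sq_nonneg (n*p - q),
    mul_nonneg (mul_nonneg (by linarith : (0:ℤ) ≤ n-1) (by linarith : (0:ℤ) ≤ p-2))
      (by linarith : (0:ℤ) ≤ q),
    mul_nonneg (by linarith : (0:ℤ) ≤ n-1) (by linarith : (0:ℤ) ≤ p-1),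
    sq_nonneg (n*(p-1) - (q-1)),
    mul_pos (by linarith : (0:ℤ) < n) (by linarith : (0:ℤ) < p)]

private lemma coeffs_binom (n m j : ℕ) (hn : 1 ≤ n) (h : j + 2 ≤ m) :
    (n:ℤ) * (m.choose (j+1)) ≤ (n:ℤ)^2 * m.choose j + m.choose (j+2) := by
  have hjm : j ≤ m := by omega
  have r1 : (m.choose (j+1) : ℤ) * (j+1) = m.choose j * (m - j) := by
    have := congrArg (Nat.cast : ℕ → ℤ) (Nat.choose_succ_right_eq m j)
    push_cast [Nat.cast_sub hjm] at this
    linarith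
  have r2 : (m.choose (j+2) : ℤ) * (j+2) = m.choose (j+1) * (m - (j+1)) := by
    have := congrArg (Nat.cast : ℕ → ℤ) (Nat.choose_succ_right_eq m (j+1))
    push_cast [Nat.cast_sub (by omega : j + 1 ≤ m)] at this
    linarith
  have hq2 : (2:ℤ) ≤ (m:ℤ) - j := by
    have : (j:ℤ) + 2 ≤ m := by exact_mod_cast h
    linarith
  have hkey := coeffs_key n (j+2) (m - j) (by exact_mod_cast hn) (by linarith) hq2
  have hc : (0:ℤ) ≤ m.choose j := by positivity
  have hmul : ((j:ℤ)+1) * ((j:ℤ)+2) * ((n:ℤ) * m.choose (j+1)) ≤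
      ((j:ℤ)+1) * ((j:ℤ)+2) * ((n:ℤ)^2 * m.choose j + m.choose (j+2)) := by
    have expand : ((j:ℤ)+1) * ((j:ℤ)+2) * ((n:ℤ)^2 * m.choose j + m.choose (j+2)) -
        ((j:ℤ)+1) * ((j:ℤ)+2) * ((n:ℤ) * m.choose (j+1)) =
        (m.choose j : ℤ) * ((n:ℤ)^2 * ((j:ℤ)+2) * (((j:ℤ)+2)-1) + ((m:ℤ)-j)*(((m:ℤ)-j)-1)
          - (n:ℤ) * ((j:ℤ)+2) * ((m:ℤ)-j)) := by
      linear_combination ((j:ℤ)+1) * r2 + ((m:ℤ)-(j:ℤ)-1 - (n:ℤ)*((j:ℤ)+2)) * r1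
    nlinarith [mul_nonneg hc (by linarith : (0:ℤ) ≤
      (n:ℤ)^2 * ((j:ℤ)+2) * (((j:ℤ)+2)-1) + ((m:ℤ)-j)*(((m:ℤ)-j)-1)
        - (n:ℤ) * ((j:ℤ)+2) * ((m:ℤ)-j))]
  have hpos : (0:ℤ) < ((j:ℤ)+1) * ((j:ℤ)+2) := by positivity
  exact le_of_mul_le_mul_left hmul hpos

/-- For `n, m ≥ 1`, the polynomial `(y + n)^m (y^2 - y + 1) ∈ ℤ[y]` has all
coefficients nonnegative if and only if `m ≥ n`. -/
theorem coeffs_nonneg_iff :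
    ∀ n m : ℕ, 1 ≤ n → 1 ≤ m →
      ((∀ k : ℕ,
          0 ≤ (((X + C (n : ℤ)) ^ m * (X ^ 2 - X + 1)) : Polynomial ℤ).coeff k)
        ↔ n ≤ m) := by
  intro n m hn hm
  set P : Polynomial ℤ := (X + C (n : ℤ)) ^ m with hP
  have hco : ∀ k, (P * (X ^ 2 - X + 1)).coeff k =
      (if 2 ≤ k then P.coeff (k - 2) else 0)
      - (if 1 ≤ k then P.coeff (k - 1) else 0) + P.coeff k := by
    intro k
    rw [mul_add, mul_sub, mul_one, coeff_add, coeff_sub, coeff_mul_X_pow',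
      show (X : Polynomial ℤ) = X ^ 1 by rw [pow_one], coeff_mul_X_pow']
  have hPc : ∀ i, P.coeff i = (n:ℤ) ^ (m - i) * m.choose i := fun i =>
    coeff_X_add_C_pow (n : ℤ) m i
  have hpowm : ((n:ℤ)) ^ m = (n:ℤ) ^ (m - 1) * n := by
    rw [← pow_succ]; congr 1; omega
  have hn1 : (1:ℤ) ≤ (n:ℤ) := by exact_mod_cast hn
  constructor
  · intro h
    have h1 := h 1
    rw [hco 1] at h1
    simp only [hPc] at h1
    norm_num at h1
    rw [hpowm] at h1
    have hpow : (0:ℤ) < (n:ℤ) ^ (m - 1) := by positivity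
    have h2 : (n:ℤ) ^ (m-1) * (n:ℤ) ≤ (n:ℤ) ^ (m-1) * m := by linarith
    have := le_of_mul_le_mul_left h2 hpow
    exact_mod_cast this
  · intro hnm k
    rw [hco k]
    match k with
    | 0 =>
      simp only [hPc]
      norm_num
    | 1 =>
      simp only [hPc]
      norm_num
      rw [hpowm]
      have : ((n:ℤ)) ≤ (m:ℤ) := by exact_mod_cast hnm
      have hpow : (0:ℤ) ≤ (n:ℤ) ^ (m - 1) := by positivity
      nlinarith
    | (j+2) =>
      rw [if_pos (show 2 ≤ j + 2 by omega), if_pos (show 1 ≤ j + 2 by omega)]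
      have e1 : j + 2 - 2 = j := by omega
      have e2 : j + 2 - 1 = j + 1 := by omega
      rw [e1, e2, hPc, hPc, hPc]
      rcases lt_or_ge m (j + 1) with hmj | hmj
      · rw [Nat.choose_eq_zero_of_lt hmj,
          Nat.choose_eq_zero_of_lt (show m < j + 2 by omega)]
        norm_num
        positivity
      · rcases eq_or_lt_of_le hmj with hmj1 | hmj2
        · -- m = j + 1
          rw [Nat.choose_eq_zero_of_lt (by omega : m < j + 2),
            show m - j = 1 by omega, show m - (j+1) = 0 by omega, ← hmj1,
            Nat.choose_self]
          norm_num
          have hc1 : (1:ℤ) ≤ m.choose j := by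
            exact_mod_cast Nat.choose_pos (show j ≤ m by omega)
          nlinarith
        · have h2 : j + 2 ≤ m := by omega
          rw [show m - j = (m - j - 2) + 2 by omega,
            show m - (j+1) = (m - j - 2) + 1 by omega,
            show m - (j+2) = m - j - 2 by omega, pow_succ, pow_succ]
          have hb := coeffs_binom n m j hn h2
          have hpow : (0:ℤ) ≤ (n:ℤ) ^ (m - j - 2) := by positivity
          nlinarith
end

section
/- For every n ≥ 1, the polynomial (x + n)^n (x^2 − x + 1) is irreducible in ℕ[x]: it has nonnegative coefficients and cannot be written as a product of two nonunit polynomials with natural number coefficients. -/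
open Polynomial

private lemma q_monic : (X ^ 2 - X + 1 : Polynomial ℤ).Monic := by
  have h : (X ^ 2 - X + 1 : Polynomial ℤ) = X ^ 2 + (-X + 1) := by ring
  rw [h]
  apply monic_X_pow_add
  have : (-X + 1 : Polynomial ℤ).degree ≤ 1 := by compute_degree
  exact lt_of_le_of_lt this (by norm_num)

private lemma q_irred : Irreducible (X ^ 2 - X + 1 : Polynomial ℤ) := by
  have hdeg : (X ^ 2 - X + 1 : Polynomial ℤ).natDegree = 2 := by
    compute_degree!
  rw [q_monic.irreducible_iff_roots_eq_zero_of_degree_le_three (by omega) (by omega)]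
  rw [Multiset.eq_zero_iff_forall_notMem]
  intro r hr
  rw [mem_roots q_monic.ne_zero, IsRoot.def] at hr
  simp only [eval_add, eval_sub, eval_pow, eval_X, eval_one] at hr
  nlinarith [sq_nonneg (2 * r - 1)]

private lemma q_prime : Prime (X ^ 2 - X + 1 : Polynomial ℤ) :=
  (UniqueFactorizationMonoid.irreducible_iff_prime).mp q_irred

private lemma lin_prime (n : ℤ) : Prime (X + C n : Polynomial ℤ) := by
  simpa [sub_neg_eq_add, map_neg] using prime_X_sub_C (-n)

private lemma coeff_zero_mul_q (Q : Polynomial ℤ) :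
    (Q * (X ^ 2 - X + 1)).coeff 0 = Q.coeff 0 := by
  rw [mul_coeff_zero]
  simp

private lemma coeff_one_mul_q (Q : Polynomial ℤ) :
    (Q * (X ^ 2 - X + 1)).coeff 1 = Q.coeff 1 - Q.coeff 0 := by
  have h : Q * (X ^ 2 - X + 1) = Q * X * X - Q * X + Q := by ring
  rw [h]
  simp only [coeff_add, coeff_sub]
  have h0 : (Q * X * X).coeff 1 = (Q * X).coeff 0 := coeff_mul_X _ _
  have h1 : (Q * X).coeff 1 = Q.coeff 0 := coeff_mul_X _ _
  have h2 : (Q * X).coeff 0 = 0 := by rw [mul_coeff_zero, coeff_X_zero, mul_zero]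
  rw [h0, h1, h2]
  ring

private lemma coeff_add_two_mul_q (Q : Polynomial ℤ) (j : ℕ) :
    (Q * (X ^ 2 - X + 1)).coeff (j + 2)
      = Q.coeff j - Q.coeff (j + 1) + Q.coeff (j + 2) := by
  have h : Q * (X ^ 2 - X + 1) = Q * X * X - Q * X + Q := by ring
  have h2 : j + 2 = (j + 1) + 1 := rfl
  rw [h]
  simp only [coeff_add, coeff_sub, h2, coeff_mul_X]

private lemma choose_mul_pow_le (n j : ℕ) :
    n.choose (j + 1) * n ^ (n - (j + 1)) ≤ n.choose j * n ^ (n - j) := by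
  rcases le_or_gt n j with h | h
  · rw [Nat.choose_eq_zero_of_lt (by omega), zero_mul]
    exact Nat.zero_le _
  · have h1 : n - j = (n - (j + 1)) + 1 := by omega
    calc n.choose (j + 1) * n ^ (n - (j + 1))
        ≤ (n.choose (j + 1) * (j + 1)) * n ^ (n - (j + 1)) :=
          Nat.mul_le_mul_right _ (Nat.le_mul_of_pos_right _ (by omega))
      _ = (n.choose j * (n - j)) * n ^ (n - (j + 1)) := by
          rw [Nat.choose_succ_right_eq]
      _ ≤ (n.choose j * n) * n ^ (n - (j + 1)) :=
          Nat.mul_le_mul_right _ (Nat.mul_le_mul_left _ (by omega))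
      _ = n.choose j * n ^ (n - j) := by rw [h1, pow_succ]; ring

private lemma neg_coeff_one {n b : ℕ} (hn : 1 ≤ n) (hb : b < n) :
    (((X + C (n : ℤ)) ^ b * (X ^ 2 - X + 1)) : Polynomial ℤ).coeff 1 < 0 := by
  rw [coeff_one_mul_q, coeff_X_add_C_pow, coeff_X_add_C_pow]
  simp only [Nat.choose_zero_right, Nat.cast_one, mul_one, Nat.sub_zero]
  rcases Nat.eq_zero_or_pos b with rfl | hb1
  · norm_num
  · have hb2 : b - 1 + 1 = b := by omega
    have hpow : ((n : ℤ)) ^ b = (n : ℤ) ^ (b - 1) * n := by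
      rw [← pow_succ, hb2]
    have hsub : b - 1 = b - 1 := rfl
    rw [Nat.choose_one_right]
    have hpos : (0 : ℤ) < (n : ℤ) ^ (b - 1) := by positivity
    have hbn : (b : ℤ) < (n : ℤ) := by exact_mod_cast hb
    have : (n : ℤ) ^ (b - 1) * (b : ℤ) < (n : ℤ) ^ b := by
      rw [hpow]; nlinarith
    linarith

/-- For every `n ≥ 1`, the polynomial `(x + n)^n (x^2 - x + 1)` has nonnegative
coefficients, and it is irreducible in `ℕ[x]`: whenever it is the image of a
product `g * h` of two polynomials with natural number coefficients, `g` or `h`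
is a unit. -/
theorem key_atom_irreducible :
    ∀ n : ℕ, 1 ≤ n →
      (∀ k : ℕ,
        0 ≤ (((X + C (n : ℤ)) ^ n * (X ^ 2 - X + 1)) : Polynomial ℤ).coeff k) ∧
      (∀ g h : Polynomial ℕ,
        ((X + C (n : ℤ)) ^ n * (X ^ 2 - X + 1) : Polynomial ℤ)
            = (g * h).map (Nat.castRingHom ℤ) →
          IsUnit g ∨ IsUnit h) := by
  intro n hn
  constructor
  · -- nonnegativity of coefficients
    intro k
    match k with
    | 0 =>
      rw [coeff_zero_mul_q, coeff_X_add_C_pow]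
      positivity
    | 1 =>
      rw [coeff_one_mul_q, coeff_X_add_C_pow, coeff_X_add_C_pow]
      simp only [Nat.choose_zero_right, Nat.cast_one, mul_one, Nat.sub_zero,
        Nat.choose_one_right]
      have h1 : n - 1 + 1 = n := by omega
      have : (n : ℤ) ^ n = (n : ℤ) ^ (n - 1) * n := by rw [← pow_succ, h1]
      rw [this]
      simp
    | (j + 2) =>
      rw [coeff_add_two_mul_q, coeff_X_add_C_pow, coeff_X_add_C_pow, coeff_X_add_C_pow]
      have hle := choose_mul_pow_le n j
      have hle' : (n : ℤ) ^ (n - (j + 1)) * (n.choose (j + 1) : ℤ)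
          ≤ (n : ℤ) ^ (n - j) * (n.choose j : ℤ) := by
        have := (Nat.cast_le (α := ℤ)).mpr hle
        push_cast at this
        linarith
      have h3 : (0 : ℤ) ≤ (n : ℤ) ^ (n - (j + 2)) * (n.choose (j + 2) : ℤ) := by
        positivity
      linarith
  · -- irreducibility
    intro g h hEq
    set φ := Nat.castRingHom ℤ
    set G := g.map φ with hG
    set H := h.map φ with hHdef
    have hGH : G * H = (X + C (n : ℤ)) ^ n * (X ^ 2 - X + 1) := by
      rw [hG, hHdef, ← Polynomial.map_mul, hEq]
    have hφinj : Function.Injective φ := fun a b hab => Nat.cast_injective hab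
    -- monicity of G and H
    have hPmonic : ((X + C (n : ℤ)) ^ n * (X ^ 2 - X + 1)).Monic :=
      ((monic_X_add_C _).pow n).mul q_monic
    have hlead : G.leadingCoeff * H.leadingCoeff = 1 := by
      rw [← leadingCoeff_mul, hGH, hPmonic]
    have hGcoeff : ∀ k, 0 ≤ G.coeff k := fun k => by
      rw [hG, coeff_map, eq_natCast]
      exact Int.natCast_nonneg _
    have hHcoeff : ∀ k, 0 ≤ H.coeff k := fun k => by
      rw [hHdef, coeff_map, eq_natCast]
      exact Int.natCast_nonneg _
    have hGmonic : G.Monic := by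
      have h0 : 0 ≤ G.leadingCoeff := hGcoeff _
      rcases Int.isUnit_iff.mp (IsUnit.of_mul_eq_one _ hlead) with h1 | h1
      · exact h1
      · rw [h1] at h0; norm_num at h0
    have hHmonic : H.Monic := by
      have h0 : 0 ≤ H.leadingCoeff := hHcoeff _
      rcases Int.isUnit_iff.mp (IsUnit.of_mul_eq_one _ (by rw [mul_comm]; exact hlead)) with h1 | h1
      · exact h1
      · rw [h1] at h0; norm_num at h0
    -- the quadratic factor divides G or H
    have hqdvd : (X ^ 2 - X + 1 : Polynomial ℤ) ∣ G * H := by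
      rw [hGH]; exact Dvd.intro_left _ rfl
    -- a general lemma applied in both cases
    have key : ∀ A B : Polynomial ℤ, A.Monic → B.Monic →
        (∀ k, 0 ≤ B.coeff k) →
        A * B = (X + C (n : ℤ)) ^ n * (X ^ 2 - X + 1) →
        (X ^ 2 - X + 1 : Polynomial ℤ) ∣ B → A = 1 := by
      intro A B hA hB hBc hABeq hdvd
      obtain ⟨B', hB'⟩ := hdvd
      have hq0 : (X ^ 2 - X + 1 : Polynomial ℤ) ≠ 0 := q_monic.ne_zero
      have hAB' : A * B' = (X + C (n : ℤ)) ^ n := by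
        have : A * B' * (X ^ 2 - X + 1) = (X + C (n : ℤ)) ^ n * (X ^ 2 - X + 1) := by
          rw [← hABeq, hB']; ring
        exact mul_right_cancel₀ hq0 this
      have hAdvd : A ∣ (X + C (n : ℤ)) ^ n := ⟨B', hAB'.symm⟩
      obtain ⟨a, ha, hassoc⟩ := (dvd_prime_pow (lin_prime (n : ℤ)) n).mp hAdvd
      have hA_eq : A = (X + C (n : ℤ)) ^ a :=
        eq_of_monic_of_associated hA ((monic_X_add_C _).pow a) hassoc
      rcases Nat.eq_zero_or_pos a with rfl | hapos
      · rw [hA_eq, pow_zero]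
      · -- contradiction: B has a negative coefficient
        exfalso
        have hB'_eq : B' = (X + C (n : ℤ)) ^ (n - a) := by
          have hsplit : (X + C (n : ℤ)) ^ n
              = (X + C (n : ℤ)) ^ a * (X + C (n : ℤ)) ^ (n - a) := by
            rw [← pow_add]; congr 1; omega
          have hpow0 : ((X + C (n : ℤ)) ^ a) ≠ 0 :=
            ((monic_X_add_C _).pow a).ne_zero
          apply mul_left_cancel₀ hpow0
          rw [← hsplit, ← hAB', hA_eq]
        have hBneg : B.coeff 1 < 0 := by
          rw [hB', hB'_eq, mul_comm]
          exact neg_coeff_one hn (by omega)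
        exact absurd (hBc 1) (not_le.mpr hBneg)
    rcases q_prime.2.2 _ _ hqdvd with hdG | hdH
    · -- q divides G, so H = 1, so h = 1
      right
      have hH1 : H = 1 := key H G hHmonic hGmonic hGcoeff (by rw [mul_comm]; exact hGH) hdG
      have : h = 1 := by
        apply Polynomial.map_injective φ hφinj
        rw [← hHdef, hH1, Polynomial.map_one]
      rw [this]; exact isUnit_one
    · -- q divides H, so G = 1, so g = 1
      left
      have hG1 : G = 1 := key G H hGmonic hHmonic hHcoeff hGH hdH
      have : g = 1 := by
        apply Polynomial.map_injective φ hφinj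
        rw [← hG, hG1, Polynomial.map_one]
      rw [this]; exact isUnit_one
end

section
/- The multiplicative monoid of nonzero polynomials in ℕ[x] has full and infinite elasticity: for every rational q > 1 there exists f ∈ ℕ[x] with elasticity ρ(f) = q, and sup of elasticities is infinite. Concretely, for k ≥ 1 and n ≥ 2, the polynomial g = (x + n)^n (x^2 − x + 1)(x + 1)^k has exactly two factorization lengths, k + 1 and k + n, so ρ(g) = (k + n)/(k + 1), and {(k+n)/(k+1) : k ∈ ℕ, n ≥ 2} = ℚ ∩ (1, ∞). -/
open Polynomial

/-- The set of lengths of factorizations of `f` into irreducibles of `ℕ[x]`. -/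
def LengthSet (f : Polynomial ℕ) : Set ℕ :=
  {L : ℕ | ∃ z : Multiset (Polynomial ℕ),
    (∀ p ∈ z, MonoidIrreducible p) ∧ z.prod = f ∧ z.card = L}

lemma dvd_prod_primes {α : Type*} [CommMonoidWithZero α] [IsCancelMulZero α] (s : Multiset α) :
    ∀ (P : α), (∀ p ∈ s, Prime p) → P ∣ s.prod → ∃ t ≤ s, Associated t.prod P := by
  induction s using Multiset.induction_on with
  | empty =>
    intro P _ hP
    exact ⟨0, le_refl _, by
      simpa [Associated.comm, associated_one_iff_isUnit]
        using isUnit_of_dvd_one (by simpa using hP)⟩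
  | cons p s ih =>
    intro P hprime hP
    have hp : Prime p := hprime p (Multiset.mem_cons_self _ _)
    rw [Multiset.prod_cons] at hP
    by_cases hdvd : p ∣ P
    · obtain ⟨P', rfl⟩ := hdvd
      have : P' ∣ s.prod := (mul_dvd_mul_iff_left hp.ne_zero).mp hP
      obtain ⟨t, ht, hass⟩ := ih P' (fun q hq => hprime q (Multiset.mem_cons_of_mem hq)) this
      exact ⟨p ::ₘ t, Multiset.cons_le_cons p ht,
        by rw [Multiset.prod_cons]; exact hass.mul_left p⟩
    · obtain ⟨Q, hQ⟩ := hP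
      have hpPQ : p ∣ P * Q := ⟨s.prod, hQ.symm⟩
      rcases hp.dvd_mul.mp hpPQ with h | h
      · exact absurd h hdvd
      · obtain ⟨Q', rfl⟩ := h
        have hPs : P ∣ s.prod := by
          refine ⟨Q', ?_⟩
          have : p * s.prod = p * (P * Q') := by rw [hQ, mul_left_comm]
          exact mul_left_cancel₀ hp.ne_zero this
        obtain ⟨t, ht, hass⟩ := ih P (fun q hq => hprime q (Multiset.mem_cons_of_mem hq)) hPs
        exact ⟨t, le_trans ht (Multiset.le_cons_self s p), hass⟩

lemma prod_of_mem_three {α : Type*} [CommMonoid α] [DecidableEq α] (x y z : α)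
    (hxy : x ≠ y) (hxz : x ≠ z) (hyz : y ≠ z) (t : Multiset α)
    (h : ∀ w ∈ t, w = x ∨ w = y ∨ w = z) :
    t.prod = x ^ t.count x * y ^ t.count y * z ^ t.count z := by
  induction t using Multiset.induction_on with
  | empty => simp
  | cons w t ih =>
    have hw := h w (Multiset.mem_cons_self _ _)
    have ht := ih (fun u hu => h u (Multiset.mem_cons_of_mem hu))
    rcases hw with rfl | rfl | rfl <;>
      simp [Multiset.prod_cons, Multiset.count_cons, ht, hxy, hxz, hyz, hxy.symm, hxz.symm,
        hyz.symm, pow_succ, mul_comm, mul_assoc, mul_left_comm]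
lemma prime_P1 : Prime (X + 1 : ℤ[X]) := by simpa using prime_X_sub_C (-1 : ℤ)
lemma prime_P2 (n : ℕ) : Prime (X + C (n:ℤ)) := by simpa using prime_X_sub_C (-(n:ℤ))
lemma prime_P3 : Prime (X^2 - X + 1 : ℤ[X]) := by
  rw [← UniqueFactorizationMonoid.irreducible_iff_prime]
  have hm : (X^2 - X + 1 : ℤ[X]).Monic := by monicity!
  have hd : (X^2 - X + 1 : ℤ[X]).natDegree = 2 := by compute_degree!
  rw [hm.irreducible_iff_roots_eq_zero_of_degree_le_three (by omega) (by omega)]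
  rw [Multiset.eq_zero_iff_forall_notMem]
  intro r hr
  rw [mem_roots hm.ne_zero, IsRoot] at hr
  simp at hr
  nlinarith [hr]

lemma monic_P3 : (X^2 - X + 1 : ℤ[X]).Monic := by monicity!
lemma monic_P2 (n : ℕ) : (X + C (n:ℤ)).Monic := by monicity!
lemma monic_P1 : (X + 1 : ℤ[X]).Monic := by monicity!
lemma natDegree_P3 : (X^2 - X + 1 : ℤ[X]).natDegree = 2 := by compute_degree!

lemma natDegree_P1 : (X + 1 : ℤ[X]).natDegree = 1 := by compute_degree!
lemma natDegree_P2 (n : ℕ) : (X + C (n:ℤ)).natDegree = 1 := natDegree_X_add_C _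

lemma P1_ne_P2 {n : ℕ} (hn : 2 ≤ n) : (X + 1 : ℤ[X]) ≠ X + C (n:ℤ) := by
  intro h
  have := congrArg (fun p => Polynomial.coeff p 0) h
  simp at this
  omega
lemma P1_ne_P3 : (X + 1 : ℤ[X]) ≠ X^2 - X + 1 := by
  intro h
  have := congrArg natDegree h
  rw [natDegree_P3, natDegree_P1] at this
  omega
lemma P2_ne_P3 (n : ℕ) : (X + C (n:ℤ)) ≠ X^2 - X + 1 := by
  intro h
  have := congrArg natDegree h
  rw [natDegree_P3, natDegree_P2] at this
  omega

lemma divisor_shape {n : ℕ} (m k : ℕ) (hn : 2 ≤ n) (P : ℤ[X]) (hP : P.Monic)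
    (hdvd : P ∣ (X + C (n:ℤ))^m * (X^2-X+1) * (X+1)^k) :
    ∃ a b e, a ≤ k ∧ b ≤ m ∧ e ≤ 1 ∧
      P = (X+1)^a * (X + C (n:ℤ))^b * (X^2-X+1)^e := by
  classical
  set p1 : ℤ[X] := X + 1
  set p2 : ℤ[X] := X + C (n:ℤ)
  set p3 : ℤ[X] := X^2 - X + 1
  set s : Multiset ℤ[X] := Multiset.replicate k p1 + Multiset.replicate m p2 + {p3} with hs
  have hsprod : s.prod = p2^m * p3 * p1^k := by
    simp [hs, Multiset.prod_replicate]
    ring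
  have hprimes : ∀ p ∈ s, Prime p := by
    intro p hp
    rw [hs] at hp
    rcases Multiset.mem_add.mp hp with hp | hp
    · rcases Multiset.mem_add.mp hp with hp | hp
      · rw [Multiset.eq_of_mem_replicate hp]; exact prime_P1
      · rw [Multiset.eq_of_mem_replicate hp]; exact prime_P2 n
    · rw [Multiset.mem_singleton.mp hp]; exact prime_P3
  obtain ⟨t, ht, hass⟩ := dvd_prod_primes s P hprimes (by rw [hsprod]; exact hdvd)
  have hmem : ∀ w ∈ t, w = p1 ∨ w = p2 ∨ w = p3 := by
    intro w hw
    have := Multiset.mem_of_le ht hw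
    simp [hs, Multiset.mem_replicate] at this
    tauto
  have hprodt := prod_of_mem_three p1 p2 p3 (P1_ne_P2 hn) P1_ne_P3 (P2_ne_P3 n) t hmem
  have h12 : p1 ≠ p2 := P1_ne_P2 hn
  have h13 : p1 ≠ p3 := P1_ne_P3
  have h23 : p2 ≠ p3 := P2_ne_P3 n
  refine ⟨t.count p1, t.count p2, t.count p3, ?_, ?_, ?_, ?_⟩
  · have := Multiset.count_le_of_le p1 ht
    simpa [hs, Multiset.count_replicate, Multiset.count_singleton,
      h12, h13, h12.symm, h13.symm] using this
  · have := Multiset.count_le_of_le p2 ht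
    simpa [hs, Multiset.count_replicate, Multiset.count_singleton,
      h12, h23, h12.symm, h23.symm] using this
  · have := Multiset.count_le_of_le p3 ht
    simpa [hs, Multiset.count_replicate, Multiset.count_singleton,
      h13, h23, h13.symm, h23.symm] using this
  · have hmono : ((p1 ^ t.count p1) * (p2 ^ t.count p2) * (p3 ^ t.count p3)).Monic :=
      ((monic_P1.pow _).mul ((monic_P2 n).pow _)).mul (monic_P3.pow _)
    rw [hprodt] at hass
    exact eq_of_monic_of_associated hP hmono hass.symm

noncomputable def phi : Polynomial ℕ →+* Polynomial ℤ := mapRingHom (Nat.castRingHom ℤ)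

lemma phi_apply (p : Polynomial ℕ) : phi p = p.map (Nat.castRingHom ℤ) := rfl

lemma phi_injective : Function.Injective phi :=
  map_injective (Nat.castRingHom ℤ) Nat.cast_injective

lemma phi_coeff_nonneg (p : Polynomial ℕ) (j : ℕ) : 0 ≤ (phi p).coeff j := by
  rw [phi_apply, coeff_map]
  exact Int.natCast_nonneg _

lemma isUnit_natpoly_iff (p : Polynomial ℕ) : IsUnit p ↔ p = 1 := by
  constructor
  · intro h
    obtain ⟨r, hr, rfl⟩ := Polynomial.isUnit_iff.mp h
    rw [Nat.isUnit_iff.mp hr, map_one]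
  · rintro rfl; exact isUnit_one

lemma exists_nat_lift (P : Polynomial ℤ) (h : ∀ j, 0 ≤ P.coeff j) :
    ∃ p : Polynomial ℕ, phi p = P := by
  refine ⟨∑ j ∈ Finset.range (P.natDegree + 1), C (P.coeff j).toNat * X ^ j, ?_⟩
  rw [phi_apply, Polynomial.map_sum]
  conv_rhs => rw [P.as_sum_range_C_mul_X_pow]
  refine Finset.sum_congr rfl fun j _ => ?_
  rw [Polynomial.map_mul, Polynomial.map_pow, map_X, map_C]
  congr 1
  rw [show ((Nat.castRingHom ℤ) (P.coeff j).toNat) = ((P.coeff j).toNat : ℤ) from rfl,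
    Int.toNat_of_nonneg (h j)]

-- coeff 1 computation
lemma coeff_one_mul_P3 (A : Polynomial ℤ) :
    (A * (X^2 - X + 1)).coeff 1 = A.coeff 1 - A.coeff 0 := by
  have : A * (X^2 - X + 1) = A * X^2 - A * X + A := by ring
  rw [this, coeff_add, coeff_sub, coeff_mul_X, Polynomial.coeff_mul_X_pow']
  norm_num
  ring

lemma coeff_P2_pow (n b j : ℕ) : ((X + C (n:ℤ))^b).coeff j = (n:ℤ)^(b-j) * (b.choose j) :=
  coeff_X_add_C_pow _ _ _

lemma b_ge_n {n b : ℕ} (hn : 2 ≤ n) (p : Polynomial ℕ)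
    (h : phi p = (X + C (n:ℤ))^b * (X^2 - X + 1)) : n ≤ b := by
  have h1 := phi_coeff_nonneg p 1
  rw [h, coeff_one_mul_P3, coeff_P2_pow, coeff_P2_pow] at h1
  rcases Nat.eq_zero_or_pos b with rfl | hb
  · norm_num at h1
  · -- coeff: n^(b-1) * b - n^(b-0) * 1 ≥ 0
    rcases le_or_gt n b with h' | h'
    · exact h'
    · exfalso
      have hb0 : b - 0 = b := rfl
      rw [hb0, Nat.choose_one_right, Nat.choose_zero_right] at h1
      have hpow : (0:ℤ) < (n:ℤ)^(b-1) := by positivity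
      have : (n:ℤ)^b = (n:ℤ)^(b-1) * n := by
        rw [← pow_succ]
        congr 1
        omega
      rw [this] at h1
      push_cast at h1
      nlinarith [hpow]

lemma natDegree_shape (n a b e : ℕ) :
    ((X+1:ℤ[X])^a * (X + C (n:ℤ))^b * (X^2-X+1)^e).natDegree = a + b + 2*e := by
  rw [natDegree_mul (by exact ((monic_P1.pow a).mul ((monic_P2 n).pow b)).ne_zero)
      (by exact (monic_P3.pow e).ne_zero),
    natDegree_mul (by exact (monic_P1.pow a).ne_zero) (by exact ((monic_P2 n).pow b).ne_zero),
    natDegree_pow, natDegree_pow, natDegree_pow, natDegree_P1, natDegree_P2, natDegree_P3]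
  ring

lemma phi_X_add_one : phi (X + 1) = X + 1 := by
  rw [phi_apply]; simp

lemma phi_X_add_C (c : ℕ) : phi (X + C c) = X + C (c:ℤ) := by
  rw [phi_apply]; simp

lemma phi_cube : phi (X^3 + 1) = (X+1) * (X^2 - X + 1) := by
  rw [phi_apply]
  simp
  ring

lemma phi_ne_one_of_natDegree {p : Polynomial ℕ} {d : ℕ} (h : (phi p).natDegree = d)
    (hd : d ≠ 0) : ¬ IsUnit p := by
  rw [isUnit_natpoly_iff]
  rintro rfl
  rw [map_one, natDegree_one] at h
  omega

lemma monic_of_mul {u v : Polynomial ℕ} (h : (u * v).Monic) : u.Monic ∧ v.Monic := by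
  have hu : u ≠ 0 := by rintro rfl; simp [Monic, leadingCoeff] at h
  have hv : v ≠ 0 := by rintro rfl; simp [Monic, leadingCoeff] at h
  have hlc := leadingCoeff_mul u v
  rw [Monic] at h
  rw [h] at hlc
  have h2 : v.leadingCoeff * u.leadingCoeff = 1 := by rw [mul_comm]; exact hlc.symm
  exact ⟨Nat.eq_one_of_mul_eq_one_left h2, Nat.eq_one_of_mul_eq_one_right h2⟩

lemma phi_monic {p : Polynomial ℕ} (h : p.Monic) : (phi p).Monic := by
  rw [phi_apply]; exact h.map _

lemma irr_linear (c : ℕ) : MonoidIrreducible (X + C c) := by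
  refine ⟨?_, ?_, ?_⟩
  · intro h
    have := congrArg (fun p => Polynomial.coeff p 1) h
    simp at this
  · apply phi_ne_one_of_natDegree (d := 1) _ one_ne_zero
    rw [phi_X_add_C]
    exact natDegree_P2 c
  · intro u v huv
    have hm : (u * v).Monic := by rw [← huv]; exact monic_X_add_C c
    obtain ⟨hu, hv⟩ := monic_of_mul hm
    have hdeg : u.natDegree + v.natDegree = 1 := by
      rw [← natDegree_mul hu.ne_zero hv.ne_zero, ← huv, natDegree_X_add_C]
    rcases Nat.eq_zero_or_pos u.natDegree with h0 | h0
    · left; rw [isUnit_natpoly_iff]; exact hu.natDegree_eq_zero.mp h0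
    · right; rw [isUnit_natpoly_iff]; exact hv.natDegree_eq_zero.mp (by omega)

lemma irr_X_add_one : MonoidIrreducible (X + 1) := by
  have h : (X + 1 : Polynomial ℕ) = X + C 1 := by simp
  rw [h]; exact irr_linear 1

lemma choose_ineq (n j : ℕ) (h2 : 2 ≤ j) :
    n^(n-(j-1)) * (n.choose (j-1)) ≤ n^(n-(j-2)) * (n.choose (j-2)) := by
  rcases le_or_gt (j-1) n with h | h
  · have key : n.choose (j-1) * (j-1) = n.choose (j-2) * (n - (j-2)) := by
      have hj : j - 1 = (j-2) + 1 := by omega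
      rw [hj]
      exact Nat.choose_succ_right_eq n (j-2)
    have h1 : n.choose (j-1) ≤ n.choose (j-1) * (j-1) :=
      Nat.le_mul_of_pos_right _ (by omega)
    have h3 : n.choose (j-2) * (n - (j-2)) ≤ n.choose (j-2) * n :=
      Nat.mul_le_mul_left _ (by omega)
    calc n^(n-(j-1)) * (n.choose (j-1)) ≤ n^(n-(j-1)) * (n.choose (j-2) * n) := by
          apply Nat.mul_le_mul_left
          omega
      _ = n^(n-(j-1)) * n * n.choose (j-2) := by ring
      _ = n^(n-(j-2)) * n.choose (j-2) := by
          rw [← pow_succ]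
          congr 2
          omega
  · rw [Nat.choose_eq_zero_of_lt h]
    simp

lemma coeff_mul_P3 (A : Polynomial ℤ) (j : ℕ) :
    (A * (X^2 - X + 1)).coeff j =
      (if 2 ≤ j then A.coeff (j-2) else 0) - (if 1 ≤ j then A.coeff (j-1) else 0)
        + A.coeff j := by
  have h : A * (X^2 - X + 1) = A * X^2 - A * X^1 + A := by ring
  rw [h, coeff_add, coeff_sub, Polynomial.coeff_mul_X_pow', Polynomial.coeff_mul_X_pow']

lemma qn_coeff_nonneg {n : ℕ} (hn : 1 ≤ n) (j : ℕ) :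
    0 ≤ ((X + C (n:ℤ))^n * (X^2 - X + 1)).coeff j := by
  rw [coeff_mul_P3]
  simp only [coeff_P2_pow]
  rcases Nat.lt_or_ge j 1 with h1 | h1
  · interval_cases j
    have hp : (0:ℤ) ≤ (n:ℤ)^(n-0) * (n.choose 0) := by positivity
    simpa using hp
  rcases Nat.lt_or_ge j 2 with h2 | h2
  · interval_cases j
    have : n - 0 = (n - 1) + 1 := by omega
    simp [this, Nat.choose_one_right, pow_succ]
  · simp only [if_pos h1, if_pos h2]
    have hkey := choose_ineq n j h2
    have hcast : ((n:ℤ))^(n-(j-1)) * (n.choose (j-1) : ℤ) ≤ (n:ℤ)^(n-(j-2)) * (n.choose (j-2)) := by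
      exact_mod_cast hkey
    have hpos : (0:ℤ) ≤ (n:ℤ)^(n-j) * (n.choose j) := by positivity
    linarith


lemma phi_w (n a b : ℕ) :
    phi ((X+1)^a * (X + C n)^b) = (X+1:ℤ[X])^a * (X + C (n:ℤ))^b := by
  rw [map_mul, map_pow, map_pow, phi_X_add_one, phi_X_add_C]

lemma phi_eq_one {u : Polynomial ℕ} (h : phi u = 1) : u = 1 :=
  phi_injective (by rw [h, map_one])

lemma phi_monic_of_mul {u v : Polynomial ℕ} {P : Polynomial ℤ} (hP : P.Monic)
    (h : phi u * phi v = P) : (phi u).Monic ∧ (phi v).Monic := by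
  have h0 : phi u * phi v ≠ 0 := by rw [h]; exact hP.ne_zero
  have hu0 : phi u ≠ 0 := fun hu => h0 (by rw [hu, zero_mul])
  have hv0 : phi v ≠ 0 := fun hv => h0 (by rw [hv, mul_zero])
  have hlc : (phi u).leadingCoeff * (phi v).leadingCoeff = 1 := by
    rw [← leadingCoeff_mul, h, hP.leadingCoeff]
  have hun : 0 ≤ (phi u).leadingCoeff := phi_coeff_nonneg u _
  have hvn : 0 ≤ (phi v).leadingCoeff := phi_coeff_nonneg v _
  constructor <;> rw [Monic]
  · exact Int.eq_one_of_mul_eq_one_right hun hlc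
  · exact Int.eq_one_of_mul_eq_one_left hvn hlc

lemma irr_cube : MonoidIrreducible (X^3 + 1 : Polynomial ℕ) := by
  have hphi : phi (X^3 + 1) = (X+1) * (X^2 - X + 1) := phi_cube
  have hmon3 : ((X+1:ℤ[X]) * (X^2-X+1)).Monic := monic_P1.mul monic_P3
  refine ⟨?_, ?_, ?_⟩
  · intro h
    rw [h, map_zero] at hphi
    exact hmon3.ne_zero hphi.symm
  · refine phi_ne_one_of_natDegree (d := 3) ?_ (by omega)
    rw [hphi]
    have h : ((X+1:ℤ[X]) * (X^2-X+1)) = (X+1:ℤ[X])^1 * (X + C ((2:ℕ):ℤ))^0 * (X^2-X+1)^1 := by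
      push_cast; ring
    rw [h, natDegree_shape]
  · intro u v huv
    have hphiuv : phi u * phi v = (X+1) * (X^2 - X + 1) := by
      rw [← map_mul, ← huv, hphi]
    obtain ⟨hu, hv⟩ := phi_monic_of_mul hmon3 hphiuv
    have hdvd : phi u ∣ (X + C ((2:ℕ):ℤ))^0 * (X^2-X+1) * (X+1)^1 := by
      refine ⟨phi v, ?_⟩
      rw [hphiuv]; push_cast; ring
    obtain ⟨a, b, e, ha, hb, he, hform⟩ := divisor_shape 0 1 (le_refl 2) (phi u) hu hdvd
    have hb0 : b = 0 := by omega
    subst hb0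
    interval_cases a <;> interval_cases e <;>
      simp only [pow_zero, pow_one, one_mul, mul_one] at hform
    · -- phi u = 1
      left; rw [isUnit_natpoly_iff]; exact phi_eq_one hform
    · -- phi u = X^2-X+1 : b_ge_n with n=2, b=0
      exfalso
      have : (2:ℕ) ≤ 0 := b_ge_n (n := 2) (b := 0) (le_refl 2) u
        (by rw [hform]; push_cast; ring)
      omega
    · -- phi u = X+1 : then phi v = X^2-X+1, contradiction
      exfalso
      have hv3 : phi v = X^2 - X + 1 := by
        have := hphiuv
        rw [hform] at this
        exact mul_left_cancel₀ monic_P1.ne_zero this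
      have : (2:ℕ) ≤ 0 := b_ge_n (n := 2) (b := 0) (le_refl 2) v
        (by rw [hv3]; push_cast; ring)
      omega
    · -- phi u = (X+1)*(X^2-X+1) = everything, phi v = 1
      right
      rw [isUnit_natpoly_iff]
      apply phi_eq_one
      have h2 : (X+1:ℤ[X]) * (X^2-X+1) ≠ 0 := hmon3.ne_zero
      refine mul_left_cancel₀ h2 ?_
      rw [mul_one]
      rw [hform] at hphiuv
      exact hphiuv

lemma irr_Qn {n : ℕ} (hn : 2 ≤ n) {Q : Polynomial ℕ}
    (hQ : phi Q = (X + C (n:ℤ))^n * (X^2 - X + 1)) : MonoidIrreducible Q := by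
  have hmon : ((X + C (n:ℤ))^n * (X^2 - X + 1)).Monic := ((monic_P2 n).pow n).mul monic_P3
  refine ⟨?_, ?_, ?_⟩
  · intro h
    rw [h, map_zero] at hQ
    exact hmon.ne_zero hQ.symm
  · refine phi_ne_one_of_natDegree (d := n + 2) ?_ (by omega)
    rw [hQ]
    have h : ((X + C (n:ℤ))^n * (X^2 - X + 1))
        = (X+1:ℤ[X])^0 * (X + C (n:ℤ))^n * (X^2-X+1)^1 := by ring
    rw [h, natDegree_shape]
    omega
  · intro u v huv
    have hphiuv : phi u * phi v = (X + C (n:ℤ))^n * (X^2 - X + 1) := by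
      rw [← map_mul, ← huv, hQ]
    obtain ⟨hu, hv⟩ := phi_monic_of_mul hmon hphiuv
    have hdvd : phi u ∣ (X + C (n:ℤ))^n * (X^2-X+1) * (X+1)^0 := by
      exact ⟨phi v, by rw [pow_zero, mul_one, ← hphiuv]⟩
    obtain ⟨a, b, e, ha, hb, he, hform⟩ := divisor_shape n 0 hn (phi u) hu hdvd
    have ha0 : a = 0 := by omega
    subst ha0
    rw [pow_zero, one_mul] at hform
    rcases Nat.eq_zero_or_pos e with he0 | he1
    · subst he0
      rw [pow_zero, mul_one] at hform
      rcases Nat.eq_zero_or_pos b with hb0 | hb1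
      · left
        rw [isUnit_natpoly_iff]
        apply phi_eq_one
        rw [hform, hb0, pow_zero]
      · exfalso
        have hsplit : phi u * phi v
            = phi u * ((X + C (n:ℤ))^(n-b) * (X^2 - X + 1)) := by
          rw [hphiuv, hform, ← mul_assoc, ← pow_add]
          congr 2
          omega
        have hvform : phi v = (X + C (n:ℤ))^(n-b) * (X^2 - X + 1) :=
          mul_left_cancel₀ (by rw [hform]; exact ((monic_P2 n).pow b).ne_zero) hsplit
        have := b_ge_n hn v hvform
        omega
    · have he1' : e = 1 := by omega
      subst he1'
      rw [pow_one] at hform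
      have hbn : b = n := le_antisymm hb (b_ge_n hn u hform)
      rw [hbn] at hform
      right
      rw [isUnit_natpoly_iff]
      apply phi_eq_one
      refine mul_left_cancel₀ hmon.ne_zero ?_
      rw [mul_one, ← hform]
      rw [hphiuv, hform]

lemma phi_leadingCoeff (p : Polynomial ℕ) :
    (phi p).leadingCoeff = (p.leadingCoeff : ℤ) := by
  rcases eq_or_ne p 0 with rfl | h0
  · simp
  · rw [phi_apply]
    exact leadingCoeff_map_of_leadingCoeff_ne_zero _
      (by simpa using leadingCoeff_ne_zero.mpr h0)

lemma not_unit_X_add_one : ¬ IsUnit (X + 1 : Polynomial ℕ) := irr_X_add_one.2.1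
lemma not_unit_cube : ¬ IsUnit (X^3 + 1 : Polynomial ℕ) := irr_cube.2.1
lemma not_unit_linear (c : ℕ) : ¬ IsUnit (X + C c : Polynomial ℕ) := (irr_linear c).2.1

lemma p3_not_dvd_p1p2 {n a b : ℕ} (hdvd : (X^2-X+1:ℤ[X]) ∣ (X+1:ℤ[X])^a * (X + C (n:ℤ))^b) :
    False := by
  rcases prime_P3.dvd_mul.mp hdvd with h | h
  · have h1 := prime_P3.dvd_of_dvd_pow h
    have := natDegree_le_of_dvd h1 monic_P1.ne_zero
    rw [natDegree_P3, natDegree_P1] at this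
    omega
  · have h1 := prime_P3.dvd_of_dvd_pow h
    have := natDegree_le_of_dvd h1 (monic_P2 n).ne_zero
    rw [natDegree_P3, natDegree_P2] at this
    omega

lemma length_eq {n k : ℕ} (hn : 2 ≤ n) {g : Polynomial ℕ}
    (hg : phi g = (X + C (n:ℤ))^n * (X^2-X+1) * (X+1)^k)
    {z : Multiset (Polynomial ℕ)} (hz : ∀ p ∈ z, MonoidIrreducible p)
    (hprod : z.prod = g) :
    Multiset.card z = k+1 ∨ Multiset.card z = k+n := by
  set G : Polynomial ℤ := (X + C (n:ℤ))^n * (X^2-X+1) * (X+1)^k with hGdef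
  have hGmon : G.Monic := (((monic_P2 n).pow n).mul monic_P3).mul (monic_P1.pow k)
  have hglc : g.leadingCoeff = 1 := by
    have : ((g.leadingCoeff : ℤ)) = 1 := by
      rw [← phi_leadingCoeff, hg]; exact hGmon.leadingCoeff
    exact_mod_cast this
  -- every member is monic
  have hmono : ∀ p ∈ z, (phi p).Monic := by
    intro p hp
    apply phi_monic
    obtain ⟨q, hq⟩ : p ∣ g := hprod ▸ Multiset.dvd_prod hp
    have := leadingCoeff_mul p q
    rw [← hq, hglc] at this
    exact Nat.eq_one_of_mul_eq_one_right this.symm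
  have hdvdG : ∀ p ∈ z, phi p ∣ G := by
    intro p hp
    rw [← hg]
    exact map_dvd phi (hprod ▸ Multiset.dvd_prod hp)
  -- find the factor containing x^2-x+1
  have hp3G : (X^2-X+1 : Polynomial ℤ) ∣ G := ⟨(X + C (n:ℤ))^n * (X+1)^k, by rw [hGdef]; ring⟩
  have hzG : (Multiset.map (⇑phi) z).prod = G := by
    rw [← map_multiset_prod, hprod, hg]
  obtain ⟨a0, ha0mem, ha0dvd⟩ := prime_P3.exists_mem_multiset_dvd (hzG ▸ hp3G)
  obtain ⟨p0, hp0mem, rfl⟩ := Multiset.mem_map.mp ha0mem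
  obtain ⟨z', rfl⟩ := Multiset.exists_cons_of_mem hp0mem
  -- no square of p3 divides G
  have hnsq : ¬ ((X^2-X+1 : Polynomial ℤ)^2 ∣ G) := by
    rintro ⟨c, hc⟩
    have h1 : (X^2-X+1 : Polynomial ℤ) * ((X + C (n:ℤ))^n * (X+1)^k)
        = (X^2-X+1) * ((X^2-X+1) * c) := by
      calc (X^2-X+1 : Polynomial ℤ) * ((X + C (n:ℤ))^n * (X+1)^k) = G := by rw [hGdef]; ring
        _ = (X^2-X+1)^2 * c := hc
        _ = (X^2-X+1) * ((X^2-X+1) * c) := by ring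
    have h2 := mul_left_cancel₀ monic_P3.ne_zero h1
    exact p3_not_dvd_p1p2 (n := n) (a := k) (b := n)
      (by rw [mul_comm ((X+1:ℤ[X])^k)]; exact ⟨c, h2⟩)
  -- each member of z' maps to a degree-one polynomial
  have hdeg1 : ∀ q ∈ z', (phi q).natDegree = 1 := by
    intro q hq
    have hqz : q ∈ p0 ::ₘ z' := Multiset.mem_cons_of_mem hq
    obtain ⟨a, b, e, ha, hb, he, hform⟩ :=
      divisor_shape n k hn (phi q) (hmono q hqz) (hdvdG q hqz)
    have hirr := hz q hqz
    -- e = 0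
    have he0 : e = 0 := by
      by_contra h
      have he1 : e = 1 := by omega
      have hp3q : (X^2-X+1 : Polynomial ℤ) ∣ phi q := by
        rw [hform, he1, pow_one]
        exact ⟨(X+1)^a * (X + C (n:ℤ))^b, by ring⟩
      apply hnsq
      have hd1 : (X^2-X+1 : Polynomial ℤ) * (X^2-X+1) ∣ phi p0 * (Multiset.map (⇑phi) z').prod := by
        exact mul_dvd_mul ha0dvd (dvd_trans hp3q (Multiset.dvd_prod (Multiset.mem_map_of_mem _ hq)))
      rw [← hzG, Multiset.map_cons, Multiset.prod_cons]
      rw [pow_two]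
      exact hd1
    subst he0
    rw [pow_zero, mul_one] at hform
    -- a + b ≥ 1
    have hab1 : 1 ≤ a + b := by
      by_contra h
      have : a = 0 ∧ b = 0 := by omega
      rw [this.1, this.2, pow_zero, pow_zero, mul_one] at hform
      exact hirr.2.1 (by rw [isUnit_natpoly_iff]; exact phi_eq_one hform)
    -- a + b ≤ 1
    have hab2 : a + b ≤ 1 := by
      by_contra h
      push_neg at h
      rcases Nat.eq_zero_or_pos a with ha' | ha'
      · -- a = 0, b ≥ 2 : split off X + C n
        have hb2 : 2 ≤ b := by omega
        have hsplit : q = (X + C n) * (X + C n)^(b-1) := by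
          apply phi_injective
          rw [map_mul, map_pow, phi_X_add_C, hform, ha', pow_zero, one_mul, ← pow_succ']
          congr 1
          omega
        rcases hirr.2.2 _ _ hsplit with hu | hu
        · exact not_unit_linear n hu
        · rw [isUnit_natpoly_iff] at hu
          have := congrArg (⇑phi) hu
          rw [map_pow, phi_X_add_C, map_one] at this
          have hdeg := congrArg natDegree this
          rw [natDegree_pow, natDegree_P2, natDegree_one] at hdeg
          omega
      · -- a ≥ 1 : split off X + 1
        have hsplit : q = (X + 1) * ((X+1)^(a-1) * (X + C n)^b) := by
          apply phi_injective
          rw [map_mul, phi_X_add_one, phi_w, hform, ← mul_assoc, ← pow_succ']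
          congr 2
          omega
        rcases hirr.2.2 _ _ hsplit with hu | hu
        · exact not_unit_X_add_one hu
        · rw [isUnit_natpoly_iff] at hu
          have := congrArg (⇑phi) hu
          rw [phi_w, map_one] at this
          have hdeg := congrArg natDegree this
          have hshape : ((X+1:ℤ[X])^(a-1) * (X + C (n:ℤ))^b).natDegree = (a-1) + b + 2*0 := by
            have h9 : ((X+1:ℤ[X])^(a-1) * (X + C (n:ℤ))^b)
                = (X+1:ℤ[X])^(a-1) * (X + C (n:ℤ))^b * (X^2-X+1)^0 := by ring
            rw [h9, natDegree_shape]
          rw [hshape, natDegree_one] at hdeg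
          omega
    have hform' : (phi q).natDegree = a + b + 2*0 := by
      have h9 : (X+1:ℤ[X])^a * (X + C (n:ℤ))^b
          = (X+1:ℤ[X])^a * (X + C (n:ℤ))^b * (X^2-X+1)^0 := by ring
      rw [hform, h9, natDegree_shape]
    omega
  -- the special factor has degree 3 or n+2
  have hdeg0 : (phi p0).natDegree = 3 ∨ (phi p0).natDegree = n + 2 := by
    obtain ⟨a, b, e, ha, hb, he, hform⟩ :=
      divisor_shape n k hn (phi p0) (hmono p0 hp0mem) (hdvdG p0 hp0mem)
    have hirr := hz p0 hp0mem
    have he1 : e = 1 := by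
      rcases Nat.eq_zero_or_pos e with h | h
      · exfalso
        rw [hform, h, pow_zero, mul_one] at ha0dvd
        exact p3_not_dvd_p1p2 ha0dvd
      · omega
    subst he1
    rw [pow_one] at hform
    rcases Nat.eq_zero_or_pos a with ha' | ha'
    · -- a = 0 : phi p0 = p2^b * p3 with b = n
      right
      have hbge := b_ge_n hn p0 (by rw [hform, ha', pow_zero, one_mul])
      have hbn : b = n := by omega
      rw [hform, ha', hbn, pow_zero, one_mul]
      have h9 : ((X + C (n:ℤ))^n * (X^2-X+1))
          = (X+1:ℤ[X])^0 * (X + C (n:ℤ))^n * (X^2-X+1)^1 := by ring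
      rw [h9, natDegree_shape]
      omega
    · -- a ≥ 1 : then a = 1, b = 0, phi p0 = (x+1)(x^2-x+1), degree 3
      have hab : a = 1 ∧ b = 0 := by
        by_contra hcon
        have h2 : 1 ≤ (a - 1) + b := by omega
        have hsplit : p0 = (X^3 + 1) * ((X+1)^(a-1) * (X + C n)^b) := by
          apply phi_injective
          rw [map_mul, phi_cube, phi_w, hform]
          have h9 : (X+1:ℤ[X])^a = (X+1)^(a-1) * (X+1) := by
            rw [← pow_succ]; congr 1; omega
          rw [h9]; ring
        rcases hirr.2.2 _ _ hsplit with hu | hu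
        · exact not_unit_cube hu
        · rw [isUnit_natpoly_iff] at hu
          have := congrArg (⇑phi) hu
          rw [phi_w, map_one] at this
          have hdeg := congrArg natDegree this
          have hshape : ((X+1:ℤ[X])^(a-1) * (X + C (n:ℤ))^b).natDegree = (a-1) + b + 2*0 := by
            have h9 : ((X+1:ℤ[X])^(a-1) * (X + C (n:ℤ))^b)
                = (X+1:ℤ[X])^(a-1) * (X + C (n:ℤ))^b * (X^2-X+1)^0 := by ring
            rw [h9, natDegree_shape]
          rw [hshape, natDegree_one] at hdeg
          omega
      left
      rw [hform, hab.1, hab.2]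
      have h9 : ((X+1:ℤ[X])^1 * (X + C (n:ℤ))^0 * (X^2-X+1))
          = (X+1:ℤ[X])^1 * (X + C (n:ℤ))^0 * (X^2-X+1)^1 := by ring
      rw [h9, natDegree_shape]
  -- degree counting
  have hGdeg : G.natDegree = k + n + 2 := by
    have h9 : G = (X+1:ℤ[X])^k * (X + C (n:ℤ))^n * (X^2-X+1)^1 := by rw [hGdef]; ring
    rw [h9, natDegree_shape]
  have hzero : (0 : Polynomial ℤ) ∉ Multiset.map (⇑phi) (p0 ::ₘ z') := by
    intro h
    obtain ⟨p, hpmem, hp0⟩ := Multiset.mem_map.mp h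
    exact (hmono p hpmem).ne_zero hp0
  have hsum := natDegree_multiset_prod _ hzero
  rw [hzG] at hsum
  rw [Multiset.map_cons, Multiset.map_cons, Multiset.sum_cons] at hsum
  have hrepl : Multiset.map natDegree (Multiset.map (⇑phi) z')
      = Multiset.replicate (Multiset.card z') 1 := by
    apply Multiset.eq_replicate.mpr
    constructor
    · rw [Multiset.card_map, Multiset.card_map]
    · intro d hd
      obtain ⟨P, hPmem, hPd⟩ := Multiset.mem_map.mp hd
      obtain ⟨q, hqmem, rfl⟩ := Multiset.mem_map.mp hPmem
      rw [← hPd]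
      exact hdeg1 q hqmem
  rw [hrepl, Multiset.sum_replicate, smul_eq_mul, mul_one] at hsum
  rw [Multiset.card_cons]
  rcases hdeg0 with h | h <;> rw [h] at hsum
  · right; omega
  · left; omega

lemma ratio_set_eq :
    {q : ℚ | ∃ k n : ℕ, 1 ≤ k ∧ 2 ≤ n ∧ q = ((k : ℚ) + n) / ((k : ℚ) + 1)}
      = {q : ℚ | 1 < q} := by
  ext q
  simp only [Set.mem_setOf_eq]
  constructor
  · rintro ⟨k, n, hk, hn, rfl⟩
    rw [lt_div_iff₀ (by positivity)]
    have hk' : (1:ℚ) ≤ k := by exact_mod_cast hk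
    have hn' : (2:ℚ) ≤ n := by exact_mod_cast hn
    linarith
  · intro hq
    have hden : 0 < (q.den : ℤ) := by exact_mod_cast q.pos
    have hnum : (q.den : ℤ) < q.num := by
      have h1 : (1:ℚ) = (1:ℤ) / (1:ℤ) := by norm_num
      rw [← Rat.num_div_den q, lt_div_iff₀ (by exact_mod_cast hden)] at hq
      have : (1:ℚ) * (q.den:ℚ) = (q.den:ℚ) := by ring
      rw [this] at hq
      exact_mod_cast hq
    refine ⟨2 * q.den - 1, (q.num - q.den).toNat * 2 + 1, by omega, by omega, ?_⟩
    have h1 : ((2 * q.den - 1 : ℕ) : ℚ) = 2 * (q.den : ℚ) - 1 := by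
      have : (1:ℕ) ≤ 2 * q.den := by have := q.pos; omega
      push_cast [this]
      ring
    have h2 : (((q.num - q.den).toNat * 2 + 1 : ℕ) : ℚ) = ((q.num : ℚ) - q.den) * 2 + 1 := by
      have ht : ((q.num - q.den).toNat : ℤ) = q.num - q.den := Int.toNat_of_nonneg (by omega)
      have ht' : (((q.num - q.den).toNat : ℕ) : ℚ) = (q.num:ℚ) - q.den := by
        exact_mod_cast congrArg (fun x : ℤ => (x:ℚ)) ht
      push_cast [ht']
      ring
    rw [h1, h2]
    rw [show (2 * (q.den:ℚ) - 1) + (((q.num:ℚ) - q.den) * 2 + 1) = 2 * q.num by ring,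
      show (2 * (q.den:ℚ) - 1) + 1 = 2 * q.den by ring]
    rw [mul_div_mul_left _ _ (by norm_num : (2:ℚ) ≠ 0)]
    exact (Rat.num_div_den q).symm

/-- `ℕ[x]*` has full and infinite elasticity. Concretely: for every `k ≥ 1` and
`n ≥ 2` there is `g ∈ ℕ[x]` equal (over `ℤ`) to `(x+n)^n (x^2-x+1)(x+1)^k`
whose set of factorization lengths is exactly `{k+1, k+n}`, so that
`ρ(g) = (k+n)/(k+1)`; and the set of such ratios is exactly the set of all
rationals `> 1`, whence every rational `q > 1` is an elasticity and the
elasticity of `ℕ[x]*` is infinite. -/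
theorem natPolynomial_full_infinite_elasticity :
    (∀ k n : ℕ, 1 ≤ k → 2 ≤ n →
      ∃ g : Polynomial ℕ,
        g.map (Nat.castRingHom ℤ)
          = (X + C (n : ℤ)) ^ n * (X ^ 2 - X + 1) * (X + 1) ^ k ∧
        LengthSet g = {k + 1, k + n}) ∧
    {q : ℚ | ∃ k n : ℕ, 1 ≤ k ∧ 2 ≤ n ∧ q = ((k : ℚ) + n) / ((k : ℚ) + 1)}
      = {q : ℚ | 1 < q} := by
  refine ⟨?_, ratio_set_eq⟩
  intro k n hk hn
  obtain ⟨Q, hQ⟩ := exists_nat_lift ((X + C (n:ℤ))^n * (X^2 - X + 1))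
    (qn_coeff_nonneg (by omega))
  refine ⟨Q * (X+1)^k, ?_, ?_⟩
  · rw [← phi_apply, map_mul, map_pow, phi_X_add_one, hQ]
  · have hg : phi (Q * (X+1)^k) = (X + C (n:ℤ))^n * (X^2-X+1) * (X+1)^k := by
      rw [map_mul, map_pow, phi_X_add_one, hQ]
    ext L
    simp only [LengthSet, Set.mem_setOf_eq, Set.mem_insert_iff, Set.mem_singleton_iff]
    constructor
    · rintro ⟨z, hz, hprod, rfl⟩
      exact length_eq hn hg hz hprod
    · rintro (rfl | rfl)
      · -- length k+1 : Q together with k copies of X+1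
        refine ⟨Q ::ₘ Multiset.replicate k (X+1), ?_, ?_, ?_⟩
        · intro p hp
          rcases Multiset.mem_cons.mp hp with rfl | hp'
          · exact irr_Qn hn hQ
          · rw [Multiset.eq_of_mem_replicate hp']
            exact irr_X_add_one
        · rw [Multiset.prod_cons, Multiset.prod_replicate]
        · rw [Multiset.card_cons, Multiset.card_replicate]
      · -- length k+n : (X^3+1), n copies of X+C n, k-1 copies of X+1
        refine ⟨(X^3+1) ::ₘ (Multiset.replicate n (X + C n)
            + Multiset.replicate (k-1) (X+1)), ?_, ?_, ?_⟩
        · intro p hp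
          rcases Multiset.mem_cons.mp hp with rfl | hp'
          · exact irr_cube
          · rcases Multiset.mem_add.mp hp' with h | h
            · rw [Multiset.eq_of_mem_replicate h]; exact irr_linear n
            · rw [Multiset.eq_of_mem_replicate h]; exact irr_X_add_one
        · rw [Multiset.prod_cons, Multiset.prod_add, Multiset.prod_replicate,
            Multiset.prod_replicate]
          apply phi_injective
          rw [hg, map_mul, map_mul, phi_cube, map_pow, map_pow, phi_X_add_C, phi_X_add_one]
          have h9 : (X+1:ℤ[X])^k = (X+1)^(k-1) * (X+1) := by
            rw [← pow_succ]; congr 1; omega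
          rw [h9]; ring
        · rw [Multiset.card_cons, Multiset.card_add, Multiset.card_replicate,
            Multiset.card_replicate]
          omega
end

section
/- Let M_p = ⟨p^{-n} p_n^{-1} : n ≥ 1⟩ be the additive submonoid of ℚ≥0 generated by the elements 1/(p^n p_n), where p is a fixed prime and (p_n) enumerates all primes different from p in increasing order. Then the set of atoms of M_p is exactly {p^{-n} p_n^{-1} : n ≥ 1}, and M_p is atomic. -/
/-- The `n`-th prime different from `p` (1-indexed, in increasing order). -/
noncomputable def primeAvoiding (p n : ℕ) : ℕ :=
  Nat.nth (fun q => Nat.Prime q ∧ q ≠ p) (n - 1)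

/-- The additive submonoid `M_p = ⟨1/(p^n p_n) : n ≥ 1⟩` of `ℚ≥0`. -/
noncomputable def Mp (p : ℕ) : AddSubmonoid ℚ :=
  AddSubmonoid.closure
    {q : ℚ | ∃ n : ℕ, 1 ≤ n ∧ q = 1 / ((p : ℚ) ^ n * (primeAvoiding p n : ℚ))}

/-- `a` is an atom of the additive monoid `M`. -/
def IsAtomOf (M : AddSubmonoid ℚ) (a : ℚ) : Prop :=
  a ∈ M ∧ a ≠ 0 ∧ ∀ b c : ℚ, b ∈ M → c ∈ M → a = b + c → b = 0 ∨ c = 0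

lemma infinite_avoiding (p : ℕ) : {q : ℕ | Nat.Prime q ∧ q ≠ p}.Infinite := by
  have : {q : ℕ | Nat.Prime q ∧ q ≠ p} = {q | Nat.Prime q} \ {p} := by
    ext q; simp [Set.mem_diff]
  rw [this]
  exact Nat.infinite_setOf_prime.diff (Set.finite_singleton p)

lemma primeAvoiding_spec (p n : ℕ) :
    (primeAvoiding p n).Prime ∧ primeAvoiding p n ≠ p :=
  Nat.nth_mem_of_infinite (infinite_avoiding p) (n - 1)

lemma gen_pos {p : ℕ} (hp : p.Prime) (n : ℕ) :
    0 < 1 / ((p : ℚ) ^ n * (primeAvoiding p n : ℚ)) := by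
  have h1 : 0 < p := hp.pos
  have h2 : 0 < primeAvoiding p n := (primeAvoiding_spec p n).1.pos
  have h1' : (0:ℚ) < (p:ℚ) := by exact_mod_cast h1
  have h2' : (0:ℚ) < (primeAvoiding p n : ℚ) := by exact_mod_cast h2
  positivity

/-- the denominator of the generator -/
lemma gen_den {p : ℕ} (hp : p.Prime) (n : ℕ) :
    (1 / ((p : ℚ) ^ n * (primeAvoiding p n : ℚ))).den = p ^ n * primeAvoiding p n := by
  have h : ((p ^ n * primeAvoiding p n : ℕ) : ℚ) = (p : ℚ) ^ n * (primeAvoiding p n : ℚ) := by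
    push_cast; ring
  rw [← h, one_div, Rat.inv_natCast_den_of_pos]
  exact Nat.mul_pos (Nat.pow_pos hp.pos) (primeAvoiding_spec p n).1.pos

/-- key number theory fact: p_n doesn't divide the denominator of g_k for g_k ≠ g_n -/
lemma not_dvd_den {p : ℕ} (hp : p.Prime) {n k : ℕ} (hn : 1 ≤ n) (hk : 1 ≤ k)
    (hne : (1 / ((p : ℚ) ^ k * (primeAvoiding p k : ℚ)))
        ≠ 1 / ((p : ℚ) ^ n * (primeAvoiding p n : ℚ))) :
    ¬ primeAvoiding p n ∣ (1 / ((p : ℚ) ^ k * (primeAvoiding p k : ℚ))).den := by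
  rw [gen_den hp k]
  intro hdvd
  have hpn := (primeAvoiding_spec p n).1
  rcases (Nat.Prime.dvd_mul hpn).mp hdvd with h | h
  · have := Nat.Prime.dvd_of_dvd_pow hpn h
    exact (primeAvoiding_spec p n).2 ((Nat.prime_dvd_prime_iff_eq hpn hp).mp this)
  · have heq : primeAvoiding p n = primeAvoiding p k :=
      (Nat.prime_dvd_prime_iff_eq hpn (primeAvoiding_spec p k).1).mp h
    have : n - 1 = k - 1 := Nat.nth_injective (infinite_avoiding p)
      (by unfold primeAvoiding at heq; exact heq)
    have hnk : k = n := by omega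
    exact hne (by rw [hnk])

/-- sum of rationals with p_n-free denominators has p_n-free denominator -/
lemma sum_den {q : ℕ} (hq : q.Prime) (z : Multiset ℚ)
    (h : ∀ e ∈ z, ¬ q ∣ e.den) : ¬ q ∣ z.sum.den := by
  induction z using Multiset.induction with
  | empty => simpa using hq.one_lt.ne'
  | cons a s ih =>
    rw [Multiset.sum_cons]
    intro hd
    have := (Rat.add_den_dvd a s.sum)
    rcases (Nat.Prime.dvd_mul hq).mp (hd.trans this) with h' | h'
    · exact h a (Multiset.mem_cons_self a s) h'
    · exact ih (fun e he => h e (Multiset.mem_cons_of_mem he)) h'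

/-- Lemma A: a multiset of generators summing to g_n is {g_n} -/
lemma msum_nonneg (z : Multiset ℚ) (h : ∀ e ∈ z, 0 ≤ e) : 0 ≤ z.sum := by
  induction z using Multiset.induction with
  | empty => simp
  | cons a s ih =>
    rw [Multiset.sum_cons]
    exact add_nonneg (h a (Multiset.mem_cons_self a s))
      (ih fun e he => h e (Multiset.mem_cons_of_mem he))

lemma msum_pos (z : Multiset ℚ) (h : ∀ e ∈ z, 0 < e) (h0 : z ≠ 0) : 0 < z.sum := by
  obtain ⟨e, he⟩ := Multiset.exists_mem_of_ne_zero h0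
  obtain ⟨t, rfl⟩ := Multiset.exists_cons_of_mem he
  rw [Multiset.sum_cons]
  exact add_pos_of_pos_of_nonneg (h e (Multiset.mem_cons_self e t))
    (msum_nonneg t fun x hx => (h x (Multiset.mem_cons_of_mem hx)).le)

lemma multiset_eq {p : ℕ} (hp : p.Prime) {n : ℕ} (hn : 1 ≤ n) (z : Multiset ℚ)
    (hz : ∀ e ∈ z, ∃ k : ℕ, 1 ≤ k ∧ e = 1 / ((p : ℚ) ^ k * (primeAvoiding p k : ℚ)))
    (hsum : z.sum = 1 / ((p : ℚ) ^ n * (primeAvoiding p n : ℚ))) :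
    z = {1 / ((p : ℚ) ^ n * (primeAvoiding p n : ℚ))} := by
  set g := 1 / ((p : ℚ) ^ n * (primeAvoiding p n : ℚ)) with hg
  have hmem : g ∈ z := by
    by_contra hmemn
    have : ¬ primeAvoiding p n ∣ z.sum.den := by
      apply sum_den (primeAvoiding_spec p n).1
      intro e he
      obtain ⟨k, hk, rfl⟩ := hz e he
      exact not_dvd_den hp hn hk (fun h => hmemn (by rw [hg, ← h]; exact he))
    rw [hsum, gen_den hp n] at this
    exact this ⟨p ^ n, by ring⟩
  obtain ⟨z', rfl⟩ := Multiset.exists_cons_of_mem hmem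
  have hsum' : z'.sum = 0 := by
    have := hsum
    rw [Multiset.sum_cons] at this
    linarith
  have hz' : z' = 0 := by
    by_contra h0
    have : 0 < z'.sum := msum_pos z' (fun e he => by
      obtain ⟨k, hk, rfl⟩ := hz e (Multiset.mem_cons_of_mem he)
      exact gen_pos hp k) h0
    rw [hsum'] at this; exact lt_irrefl 0 this
  rw [hz']; rfl

/-- For a prime `p`, the atoms of `M_p` are exactly the generators
`1/(p^n p_n)` with `n ≥ 1`, and `M_p` is atomic: every nonzero element is a
finite sum of atoms. -/
theorem Mp_atoms_and_atomic (p : ℕ) (hp : p.Prime) :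
    ({a : ℚ | IsAtomOf (Mp p) a}
        = {q : ℚ | ∃ n : ℕ, 1 ≤ n ∧ q = 1 / ((p : ℚ) ^ n * (primeAvoiding p n : ℚ))}) ∧
    (∀ x : ℚ, x ∈ Mp p → x ≠ 0 →
      ∃ z : Multiset ℚ, (∀ a ∈ z, IsAtomOf (Mp p) a) ∧ z.sum = x) := by
  set G := {q : ℚ | ∃ n : ℕ, 1 ≤ n ∧ q = 1 / ((p : ℚ) ^ n * (primeAvoiding p n : ℚ))} with hG
  -- every generator is an atom
  have hgen_atom : ∀ a ∈ G, IsAtomOf (Mp p) a := by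
    rintro a ⟨n, hn, rfl⟩
    refine ⟨AddSubmonoid.subset_closure ⟨n, hn, rfl⟩, (gen_pos hp n).ne', ?_⟩
    intro b c hb hc habc
    obtain ⟨zb, hzb, hzbs⟩ := AddSubmonoid.exists_multiset_of_mem_closure hb
    obtain ⟨zc, hzc, hzcs⟩ := AddSubmonoid.exists_multiset_of_mem_closure hc
    have hsum : (zb + zc).sum = 1 / ((p : ℚ) ^ n * (primeAvoiding p n : ℚ)) := by
      rw [Multiset.sum_add, hzbs, hzcs, habc]
    have := multiset_eq hp hn (zb + zc)
      (fun e he => by rcases Multiset.mem_add.mp he with h | h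
                      exacts [hzb e h, hzc e h]) hsum
    have hcard : Multiset.card zb + Multiset.card zc = 1 := by
      have := congrArg Multiset.card this
      simpa using this
    rcases Nat.add_eq_one_iff.mp hcard with ⟨h1, _⟩ | ⟨_, h1⟩
    · left; rw [← hzbs, Multiset.card_eq_zero.mp h1]; rfl
    · right; rw [← hzcs, Multiset.card_eq_zero.mp h1]; rfl
  constructor
  · ext a
    simp only [Set.mem_setOf_eq]
    constructor
    · rintro ⟨hmem, hne, hatom⟩
      obtain ⟨z, hzG, hzs⟩ := AddSubmonoid.exists_multiset_of_mem_closure hmem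
      rcases z.empty_or_exists_mem with rfl | ⟨e, he⟩
      · exact absurd hzs.symm hne
      obtain ⟨z', rfl⟩ := Multiset.exists_cons_of_mem he
      rcases z'.empty_or_exists_mem with rfl | ⟨e', he'⟩
      · have : a = e := by rw [← hzs]; simp
        exact this ▸ hzG e he
      · exfalso
        have heG := hzG e he
        have hez : e ∈ Mp p := AddSubmonoid.subset_closure heG
        have hz'mem : z'.sum ∈ Mp p :=
          (Mp p).multiset_sum_mem z' (fun c hc => AddSubmonoid.subset_closure
            (hzG c (Multiset.mem_cons_of_mem hc)))
        have habc : a = e + z'.sum := by rw [← hzs, Multiset.sum_cons]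
        rcases hatom e z'.sum hez hz'mem habc with h | h
        · obtain ⟨k, _, rfl⟩ := heG
          exact (gen_pos hp k).ne' h
        · have : 0 < z'.sum := msum_pos z' (fun c hc => by
            obtain ⟨k, _, rfl⟩ := hzG c (Multiset.mem_cons_of_mem hc)
            exact gen_pos hp k) (by rintro rfl; simp at he')
          rw [h] at this; exact lt_irrefl 0 this
    · exact fun h => hgen_atom a h
  · intro x hx _
    obtain ⟨z, hzG, hzs⟩ := AddSubmonoid.exists_multiset_of_mem_closure hx
    exact ⟨z, fun a ha => hgen_atom a (hzG a ha), hzs⟩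
end
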